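/- arXiv:1909.08283 — 7 statements merged into one kernel-verified Lean document; each statement's English description precedes it below -/
import Mathlib

section
/- Let m ≥ 2. In ℝ^{2m} with the standard inner product ⟨·,·⟩, define the vectors β := 2e_{2m}, and for i = 1, …, m−1, γᵢ := (e_{2i−1} − e_{2i+1}) + (e_{2i} − e_{2i+2}) and γᵢ* := −(e_{2i−1} − e_{2i+1}) + (e_{2i} − e_{2i+2}). Then for any μ = (μ₁, …, μ_{2m}) ∈ ℝ^{2m} with Σ_{i=1}^{m} μ_{2i−1} = 0, the conditions 2⟨θ, μ⟩/⟨θ, θ⟩ ∈ ℕ for every θ ∈ {β} ∪ {γᵢ : 1 ≤ i ≤ m−1} ∪ {γᵢ* : 1 ≤ i ≤ m−1} hold if and only if: for each i = 1, …, m−1 one has μ_{2i} − μ_{2(i+1)} ∈ ℕ, μ_{2i−1} − μ_{2i+1} ∈ ℤ, these two integers have the same parity, and |μ_{2i−1} − μ_{2i+1}| ≤ μ_{2i} − μ_{2(i+1)}; and moreover μ_{2m} ∈ ℕ. -/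
noncomputable section

/-- The `k`-th standard basis vector of `ℝ^n`, with coordinates indexed 1-based and realized as
functions `ℕ → ℝ`. -/
def stdBasis (k : ℕ) : ℕ → ℝ := fun j => if j = k then 1 else 0

/-- The standard inner product of `ℝ^n`, with coordinates indexed by `1, …, n`. -/
def stdInner (n : ℕ) (f g : ℕ → ℝ) : ℝ := ∑ i ∈ Finset.Icc 1 n, f i * g i

lemma stdInner_basis (n k : ℕ) (hk1 : 1 ≤ k) (hk2 : k ≤ n) (g : ℕ → ℝ) :
    stdInner n (stdBasis k) g = g k := by
  unfold stdInner stdBasis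
  rw [Finset.sum_eq_single k]
  · simp
  · intro i _ hik
    simp [hik]
  · intro h
    exact absurd (Finset.mem_Icc.mpr ⟨hk1, hk2⟩) h

lemma stdInner_add (n : ℕ) (f g h : ℕ → ℝ) :
    stdInner n (f + g) h = stdInner n f h + stdInner n g h := by
  unfold stdInner
  simp [add_mul, Finset.sum_add_distrib]

lemma stdInner_sub (n : ℕ) (f g h : ℕ → ℝ) :
    stdInner n (f - g) h = stdInner n f h - stdInner n g h := by
  unfold stdInner
  simp [sub_mul, Finset.sum_sub_distrib]

lemma stdInner_neg (n : ℕ) (f h : ℕ → ℝ) :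
    stdInner n (-f) h = -stdInner n f h := by
  unfold stdInner
  simp

lemma stdInner_smul (n : ℕ) (c : ℝ) (f h : ℕ → ℝ) :
    stdInner n (c • f) h = c * stdInner n f h := by
  unfold stdInner
  simp [Finset.mul_sum, mul_assoc]

lemma inner_gamma (n i : ℕ) (hi1 : 1 ≤ i) (h2 : 2*i+2 ≤ n) (g : ℕ → ℝ) :
    stdInner n ((stdBasis (2*i-1) - stdBasis (2*i+1)) + (stdBasis (2*i) - stdBasis (2*i+2))) g
      = (g (2*i-1) - g (2*i+1)) + (g (2*i) - g (2*i+2)) := by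
  rw [stdInner_add, stdInner_sub, stdInner_sub,
    stdInner_basis n _ (by omega) (by omega) g,
    stdInner_basis n _ (by omega) (by omega) g,
    stdInner_basis n _ (by omega) (by omega) g,
    stdInner_basis n _ (by omega) (by omega) g]

lemma inner_gamma' (n i : ℕ) (hi1 : 1 ≤ i) (h2 : 2*i+2 ≤ n) (g : ℕ → ℝ) :
    stdInner n (-(stdBasis (2*i-1) - stdBasis (2*i+1)) + (stdBasis (2*i) - stdBasis (2*i+2))) g
      = -(g (2*i-1) - g (2*i+1)) + (g (2*i) - g (2*i+2)) := by
  rw [stdInner_add, stdInner_neg, stdInner_sub, stdInner_sub,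
    stdInner_basis n _ (by omega) (by omega) g,
    stdInner_basis n _ (by omega) (by omega) g,
    stdInner_basis n _ (by omega) (by omega) g,
    stdInner_basis n _ (by omega) (by omega) g]

lemma gamma_self (n i : ℕ) (hi1 : 1 ≤ i) (h2 : 2*i+2 ≤ n) :
    stdInner n ((stdBasis (2*i-1) - stdBasis (2*i+1)) + (stdBasis (2*i) - stdBasis (2*i+2)))
      ((stdBasis (2*i-1) - stdBasis (2*i+1)) + (stdBasis (2*i) - stdBasis (2*i+2))) = 4 := by
  rw [inner_gamma n i hi1 h2]
  have e1 : 2*i-1 ≠ 2*i+1 := by omega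
  have e2 : 2*i-1 ≠ 2*i := by omega
  have e3 : 2*i-1 ≠ 2*i+2 := by omega
  have e4 : 2*i+1 ≠ 2*i := by omega
  have e5 : 2*i+1 ≠ 2*i+2 := by omega
  have e6 : 2*i ≠ 2*i+2 := by omega
  simp [stdBasis, e1, e2, e3, e4, e5, e6, e1.symm, e2.symm, e3.symm, e4.symm, e5.symm, e6.symm]
  norm_num

lemma gamma'_self (n i : ℕ) (hi1 : 1 ≤ i) (h2 : 2*i+2 ≤ n) :
    stdInner n (-(stdBasis (2*i-1) - stdBasis (2*i+1)) + (stdBasis (2*i) - stdBasis (2*i+2)))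
      (-(stdBasis (2*i-1) - stdBasis (2*i+1)) + (stdBasis (2*i) - stdBasis (2*i+2))) = 4 := by
  rw [inner_gamma' n i hi1 h2]
  have e1 : 2*i-1 ≠ 2*i+1 := by omega
  have e2 : 2*i-1 ≠ 2*i := by omega
  have e3 : 2*i-1 ≠ 2*i+2 := by omega
  have e4 : 2*i+1 ≠ 2*i := by omega
  have e5 : 2*i+1 ≠ 2*i+2 := by omega
  have e6 : 2*i ≠ 2*i+2 := by omega
  simp [stdBasis, e1, e2, e3, e4, e5, e6, e1.symm, e2.symm, e3.symm, e4.symm, e5.symm, e6.symm]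
  norm_num

lemma beta_inner (m : ℕ) (hm : 1 ≤ m) (g : ℕ → ℝ) :
    stdInner (2*m) ((2:ℝ) • stdBasis (2*m)) g = 2 * g (2*m) := by
  rw [stdInner_smul, stdInner_basis _ _ (by omega) (by omega)]

lemma beta_self (m : ℕ) (hm : 1 ≤ m) :
    stdInner (2*m) ((2:ℝ) • stdBasis (2*m)) ((2:ℝ) • stdBasis (2*m)) = 4 := by
  rw [beta_inner m hm]
  simp [stdBasis]
  norm_num

/-- In `ℝ^{2m}`, with `β := 2e_{2m}`, `γᵢ := (e_{2i−1} − e_{2i+1}) + (e_{2i} −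
e_{2i+2})` and `γᵢ* := −(e_{2i−1} − e_{2i+1}) + (e_{2i} − e_{2i+2})` for `i = 1, …, m−1`, a vector
`μ` with `Σ_{i=1}^m μ_{2i−1} = 0` satisfies `2⟨θ, μ⟩/⟨θ, θ⟩ ∈ ℕ` for all these `θ` if and only if
for each `i = 1, …, m−1`: `μ_{2i} − μ_{2(i+1)} ∈ ℕ`, `μ_{2i−1} − μ_{2i+1} ∈ ℤ`, these two have the
same parity and `|μ_{2i−1} − μ_{2i+1}| ≤ μ_{2i} − μ_{2(i+1)}`; and moreover `μ_{2m} ∈ ℕ`. -/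
theorem stmt_1 (m : ℕ) (hm : 2 ≤ m) (μ : ℕ → ℝ)
    (hμ : ∑ i ∈ Finset.Icc 1 m, μ (2 * i - 1) = 0) :
    (∀ θ ∈ (({(2 : ℝ) • stdBasis (2 * m)} ∪
        {v | ∃ i, 1 ≤ i ∧ i ≤ m - 1 ∧
          v = (stdBasis (2 * i - 1) - stdBasis (2 * i + 1)) +
              (stdBasis (2 * i) - stdBasis (2 * i + 2))} ∪
        {v | ∃ i, 1 ≤ i ∧ i ≤ m - 1 ∧
          v = -(stdBasis (2 * i - 1) - stdBasis (2 * i + 1)) +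
              (stdBasis (2 * i) - stdBasis (2 * i + 2))}) : Set (ℕ → ℝ)),
      ∃ n : ℕ, 2 * stdInner (2 * m) θ μ / stdInner (2 * m) θ θ = n) ↔
    ((∀ i, 1 ≤ i → i ≤ m - 1 →
        ∃ a : ℕ, ∃ b : ℤ,
          μ (2 * i) - μ (2 * (i + 1)) = (a : ℝ) ∧
          μ (2 * i - 1) - μ (2 * i + 1) = (b : ℝ) ∧
          (a : ℤ) % 2 = b % 2 ∧
          |μ (2 * i - 1) - μ (2 * i + 1)| ≤ μ (2 * i) - μ (2 * (i + 1))) ∧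
      ∃ n : ℕ, μ (2 * m) = n) := by
  have hm1 : 1 ≤ m := by omega
  constructor
  · intro H
    constructor
    · intro i hi1 hi2
      have hb : 2*i+2 ≤ 2*m := by omega
      obtain ⟨p, hp⟩ := H _ (Or.inl (Or.inr ⟨i, hi1, hi2, rfl⟩))
      obtain ⟨q, hq⟩ := H _ (Or.inr ⟨i, hi1, hi2, rfl⟩)
      rw [inner_gamma _ i hi1 hb, gamma_self _ i hi1 hb] at hp
      rw [inner_gamma' _ i hi1 hb, gamma'_self _ i hi1 hb] at hq
      simp only [show 2*(i+1) = 2*i+2 from by ring]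
      have hp0 : (0:ℝ) ≤ (p:ℝ) := Nat.cast_nonneg p
      have hq0 : (0:ℝ) ≤ (q:ℝ) := Nat.cast_nonneg q
      have hx : (μ (2*i-1) - μ (2*i+1)) + (μ (2*i) - μ (2*i+2)) = 2*p := by linarith
      have hy : -(μ (2*i-1) - μ (2*i+1)) + (μ (2*i) - μ (2*i+2)) = 2*q := by linarith
      refine ⟨p + q, (p:ℤ) - (q:ℤ), ?_, ?_, by omega, ?_⟩
      · push_cast; linarith
      · push_cast; linarith
      · rw [abs_le]; constructor <;> linarith
    · obtain ⟨n, hn⟩ := H _ (Or.inl (Or.inl rfl))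
      rw [beta_inner m hm1, beta_self m hm1] at hn
      exact ⟨n, by linarith⟩
  · rintro ⟨Hg, n0, hn0⟩ θ hθ
    rcases hθ with (hθ | ⟨i, hi1, hi2, rfl⟩) | ⟨i, hi1, hi2, rfl⟩
    · rw [Set.mem_singleton_iff] at hθ
      subst hθ
      refine ⟨n0, ?_⟩
      rw [beta_inner m hm1, beta_self m hm1, hn0]
      ring
    · have hb : 2*i+2 ≤ 2*m := by omega
      obtain ⟨a, b, ha, hb', hpar, habs⟩ := Hg i hi1 hi2
      simp only [show 2*(i+1) = 2*i+2 from by ring] at ha habs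
      rw [ha, hb'] at habs
      have habs' : |b| ≤ (a:ℤ) := by exact_mod_cast (by push_cast; exact habs : |(b:ℝ)| ≤ ((a:ℤ):ℝ))
      have hle := abs_le.mp habs'
      refine ⟨((b + a)/2).toNat, ?_⟩
      rw [inner_gamma _ i hi1 hb, gamma_self _ i hi1 hb, ha, hb']
      have h2 : (b + a : ℤ) = 2 * (((b + a)/2).toNat : ℤ) := by omega
      have h3 : ((b:ℝ) + a) = 2 * ((((b + a)/2).toNat : ℕ) : ℝ) := by exact_mod_cast congrArg (Int.cast : ℤ → ℝ) h2
      push_cast at h3 ⊢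
      linarith
    · have hb : 2*i+2 ≤ 2*m := by omega
      obtain ⟨a, b, ha, hb', hpar, habs⟩ := Hg i hi1 hi2
      simp only [show 2*(i+1) = 2*i+2 from by ring] at ha habs
      rw [ha, hb'] at habs
      have habs' : |b| ≤ (a:ℤ) := by exact_mod_cast (by push_cast; exact habs : |(b:ℝ)| ≤ ((a:ℤ):ℝ))
      have hle := abs_le.mp habs'
      refine ⟨((a - b)/2).toNat, ?_⟩
      rw [inner_gamma' _ i hi1 hb, gamma'_self _ i hi1 hb, ha, hb']
      have h2 : ((a:ℤ) - b) = 2 * (((a - b)/2).toNat : ℤ) := by omega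
      have h3 : ((a:ℝ) - b) = 2 * ((((a - b)/2).toNat : ℕ) : ℝ) := by exact_mod_cast congrArg (Int.cast : ℤ → ℝ) h2
      push_cast at h3 ⊢
      linarith
end
end

section
/- Let m ≥ 2. For each tuple k = (k₁, …, k_{m−1}) of odd integers, let μ(k) ∈ ℝ^{m} be the unique vector with Σ_{i=1}^{m} μᵢ = 0 and μᵢ − μ_{i+1} = kᵢ for i = 1, …, m−1, and set F(k) := Σ_{i=1}^{m} μᵢ(k)². Then F attains its minimum over all tuples of odd integers exactly at the two alternating tuples k = (1, −1, 1, −1, …) (i.e. kᵢ = (−1)^{i+1}) and k = (−1, 1, −1, 1, …) (i.e. kᵢ = (−1)^{i}); that is, F(k) ≥ F((1,−1,1,…)) for every tuple k of odd integers, with equality if and only if k is one of these two tuples. -/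
open Finset
lemma double_sum_sq (s : Finset ℕ) (f : ℕ → ℝ) :
    ∑ i ∈ s, ∑ j ∈ s, (f i - f j)^2
      = 2 * s.card * (∑ i ∈ s, f i ^ 2) - 2 * (∑ i ∈ s, f i)^2 := by
  have h : ∀ i, ∑ j ∈ s, (f i - f j)^2
      = s.card * f i ^ 2 - 2 * f i * (∑ j ∈ s, f j) + ∑ j ∈ s, f j ^ 2 := by
    intro i
    rw [Finset.sum_congr rfl (fun j _ => by ring :
      ∀ j ∈ s, (f i - f j)^2 = f i ^2 - 2 * f i * f j + f j ^2)]
    rw [Finset.sum_add_distrib, Finset.sum_sub_distrib, Finset.sum_const, ← Finset.mul_sum]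
    ring
  rw [Finset.sum_congr rfl (fun i _ => h i), Finset.sum_add_distrib, Finset.sum_sub_distrib,
    Finset.sum_const, ← Finset.sum_mul, Finset.mul_sum]
  simp only [← Finset.mul_sum]
  ring


lemma two_periodic {m : ℕ} (w : ℕ → ℝ)
    (key : ∀ i, 1 ≤ i → i + 2 ≤ m → w (i + 2) = w i) :
    ∀ i, 1 ≤ i → i ≤ m → w i = if Odd i then w 1 else w 2 := by
  intro i
  induction i using Nat.strong_induction_on with
  | _ i ih =>
    intro h1 h2
    match i, h1 with
    | 1, _ => simp
    | 2, _ => simp [(by decide : ¬ Odd 2)]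
    | (j+3), _ =>
      have hk := key (j+1) (by omega) (by omega)
      have heq : Odd (j+3) ↔ Odd (j+1) := by
        constructor
        · rintro ⟨c, hc⟩; exact ⟨c - 1, by omega⟩
        · rintro ⟨c, hc⟩; exact ⟨c + 1, by omega⟩
      rw [show j+3 = (j+1)+2 from rfl, hk, ih (j+1) (by omega) (by omega) (by omega)]
      by_cases h : Odd (j+1)
      · rw [if_pos h, if_pos (heq.mpr h)]
      · rw [if_neg h, if_neg (fun hh => h (heq.mp hh))]

lemma alt_val (m : ℕ) (hm : 2 ≤ m) (ε : ℝ) (w : ℕ → ℝ)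
    (hsum : ∑ i ∈ Finset.Icc 1 m, w i = 0)
    (hdiff : ∀ i, 1 ≤ i → i ≤ m - 1 → w i - w (i + 1) = ε * (-1 : ℝ) ^ (i + 1)) :
    ∑ i ∈ Finset.Icc 1 m, w i ^ 2 =
      (((Finset.Icc 1 m).filter (fun i => Odd i)).card
        * ((Finset.Icc 1 m).filter (fun i => ¬ Odd i)).card : ℝ) * ε ^ 2 / m := by
  have key : ∀ i, 1 ≤ i → i + 2 ≤ m → w (i + 2) = w i := by
    intro i h1 h2
    have e1 := hdiff i h1 (by omega)
    have e2 := hdiff (i+1) (by omega) (by omega)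
    have : (-1 : ℝ) ^ (i + 1 + 1) = -(-1 : ℝ) ^ (i + 1) := by ring
    rw [this] at e2
    linarith
  have hper := two_periodic w key
  have hεval : w 1 - w 2 = ε := by
    have := hdiff 1 le_rfl (by omega)
    simpa using this
  set A := (Finset.Icc 1 m).filter (fun i => Odd i) with hA
  set B := (Finset.Icc 1 m).filter (fun i => ¬ Odd i) with hB
  have hcardN : A.card + B.card = m := by
    rw [hA, hB, Finset.card_filter_add_card_filter_not]
    simp [Nat.card_Icc]
  have hcard : (A.card : ℝ) + B.card = m := by exact_mod_cast congrArg Nat.cast hcardN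
  have hsum' : (A.card : ℝ) * w 1 + B.card * w 2 = 0 := by
    rw [← hsum, ← Finset.sum_filter_add_sum_filter_not (Finset.Icc 1 m) (fun i => Odd i)]
    congr 1
    · rw [Finset.sum_congr rfl (fun i hi => ?_), Finset.sum_const, nsmul_eq_mul]
      simp only [Finset.mem_filter, Finset.mem_Icc] at hi
      rw [hper i hi.1.1 hi.1.2, if_pos hi.2]
    · rw [Finset.sum_congr rfl (fun i hi => ?_), Finset.sum_const, nsmul_eq_mul]
      simp only [Finset.mem_filter, Finset.mem_Icc] at hi
      rw [hper i hi.1.1 hi.1.2, if_neg hi.2]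
  have hsq : ∑ i ∈ Finset.Icc 1 m, w i ^ 2 = A.card * w 1 ^ 2 + B.card * w 2 ^ 2 := by
    rw [← Finset.sum_filter_add_sum_filter_not (Finset.Icc 1 m) (fun i => Odd i)]
    congr 1
    · rw [Finset.sum_congr rfl (fun i hi => ?_), Finset.sum_const, nsmul_eq_mul]
      simp only [Finset.mem_filter, Finset.mem_Icc] at hi
      rw [hper i hi.1.1 hi.1.2, if_pos hi.2]
    · rw [Finset.sum_congr rfl (fun i hi => ?_), Finset.sum_const, nsmul_eq_mul]
      simp only [Finset.mem_filter, Finset.mem_Icc] at hi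
      rw [hper i hi.1.1 hi.1.2, if_neg hi.2]
  rw [hsq]
  have hm0 : (m : ℝ) ≠ 0 := by positivity
  have hw2 : w 2 = -(A.card : ℝ) * ε / m := by
    have : ((A.card : ℝ) + B.card) * w 2 = -(A.card) * ε := by
      have : w 1 = w 2 + ε := by linarith
      rw [this] at hsum'; ring_nf; ring_nf at hsum'; linarith
    rw [hcard] at this
    field_simp at this ⊢
    linarith
  have hw1 : w 1 = (B.card : ℝ) * ε / m := by
    have : w 1 = w 2 + ε := by linarith
    rw [this, hw2]
    field_simp
    linear_combination (-ε) * hcard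
  rw [hw1, hw2]
  have hBm : (B.card : ℝ) = m - A.card := by linarith
  rw [hBm]
  simp only [div_eq_mul_inv]
  linear_combination ((A.card : ℝ) * (m - A.card) * ε ^ 2 * (m : ℝ)⁻¹) * (mul_inv_cancel₀ hm0)


lemma mu_formula (m : ℕ) (k : ℕ → ℤ) (μ : ℕ → ℝ)
    (hd : ∀ i, 1 ≤ i → i ≤ m - 1 → μ i - μ (i + 1) = (k i : ℝ)) :
    ∀ i, 1 ≤ i → i ≤ m → μ i = μ 1 - ∑ t ∈ Finset.Ico 1 i, (k t : ℝ) := by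
  intro i h1
  induction i, h1 using Nat.le_induction with
  | base => intro _; simp
  | succ i hi ih =>
    intro h2
    have hdi := hd i hi (by omega)
    have := ih (by omega)
    rw [Finset.sum_Ico_succ_top hi]
    linarith

lemma parity_S (m : ℕ) (k : ℕ → ℤ) (hodd : ∀ i, 1 ≤ i → i ≤ m - 1 → Odd (k i)) :
    ∀ i, 1 ≤ i → i ≤ m → ((∑ t ∈ Finset.Ico 1 i, k t) + (i : ℤ)) % 2 = 1 := by
  intro i h1
  induction i, h1 using Nat.le_induction with
  | base => intro _; simp
  | succ i hi ih =>
    intro h2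
    have hki := hodd i hi (by omega)
    rw [Int.odd_iff] at hki
    have hS := ih (by omega)
    rw [Finset.sum_Ico_succ_top hi]
    push_cast
    push_cast at hS
    omega


set_option maxHeartbeats 1000000 in
/-- Let `m ≥ 2`. For a tuple `k = (k₁, …, k_{m−1})` of odd integers let
`μ ∈ ℝ^m` be the unique vector with `Σ_{i=1}^m μᵢ = 0` and `μᵢ − μ_{i+1} = kᵢ`, and let
`ν ∈ ℝ^m` be the corresponding vector for the alternating tuple `(1, −1, 1, −1, …)`. Then
`Σ νᵢ² ≤ Σ μᵢ²`, with equality if and only if `k` is one of the two alternating tuples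
`kᵢ = (−1)^{i+1}` or `kᵢ = (−1)^i`. -/
theorem stmt_4 (m : ℕ) (hm : 2 ≤ m)
    (k : ℕ → ℤ) (hodd : ∀ i, 1 ≤ i → i ≤ m - 1 → Odd (k i))
    (μ ν : ℕ → ℝ)
    (hμsum : ∑ i ∈ Finset.Icc 1 m, μ i = 0)
    (hμdiff : ∀ i, 1 ≤ i → i ≤ m - 1 → μ i - μ (i + 1) = (k i : ℝ))
    (hνsum : ∑ i ∈ Finset.Icc 1 m, ν i = 0)
    (hνdiff : ∀ i, 1 ≤ i → i ≤ m - 1 → ν i - ν (i + 1) = (-1 : ℝ) ^ (i + 1)) :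
    (∑ i ∈ Finset.Icc 1 m, ν i ^ 2) ≤ (∑ i ∈ Finset.Icc 1 m, μ i ^ 2) ∧
    ((∑ i ∈ Finset.Icc 1 m, μ i ^ 2) = (∑ i ∈ Finset.Icc 1 m, ν i ^ 2) ↔
      (∀ i, 1 ≤ i → i ≤ m - 1 → k i = (-1) ^ (i + 1)) ∨
      (∀ i, 1 ≤ i → i ≤ m - 1 → k i = (-1) ^ i)) := by
  have hm0 : (0:ℝ) < m := by positivity
  -- abbreviations
  set A := (Finset.Icc 1 m).filter (fun i => Odd i) with hA
  set B := (Finset.Icc 1 m).filter (fun i => ¬ Odd i) with hB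
  have h1A : (1:ℕ) ∈ A := by
    rw [hA]; simp only [Finset.mem_filter, Finset.mem_Icc]
    exact ⟨⟨le_rfl, by omega⟩, odd_one⟩
  have h2B : (2:ℕ) ∈ B := by
    rw [hB]; simp only [Finset.mem_filter, Finset.mem_Icc]
    exact ⟨⟨by omega, hm⟩, by decide⟩
  have hcardN : A.card + B.card = m := by
    rw [hA, hB, Finset.card_filter_add_card_filter_not]
    simp [Nat.card_Icc]
  have hApos : 1 ≤ A.card := Finset.card_pos.mpr ⟨1, h1A⟩
  have hBpos : 1 ≤ B.card := Finset.card_pos.mpr ⟨2, h2B⟩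
  -- value for ν
  have hν : ∑ i ∈ Finset.Icc 1 m, ν i ^ 2 = (A.card * B.card : ℝ) / m := by
    have := alt_val m hm 1 ν hνsum (by
      intro i h1 h2; rw [one_mul]; exact hνdiff i h1 h2)
    rw [hA, hB]; rw [this]; push_cast; ring
  -- μ formula and parity
  have hμf := mu_formula m k μ hμdiff
  have hpar := parity_S m k hodd
  -- cross terms are ≥ 1
  have hodd_diff : ∀ i ∈ Finset.Icc 1 m, ∀ j ∈ Finset.Icc 1 m,
      (Odd i ↔ ¬ Odd j) → 1 ≤ (μ i - μ j)^2 := by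
    intro i hi j hj hp
    rw [Finset.mem_Icc] at hi hj
    have hfi := hμf i hi.1 hi.2
    have hfj := hμf j hj.1 hj.2
    have hcast : μ i - μ j
        = (((∑ t ∈ Finset.Ico 1 j, k t) - (∑ t ∈ Finset.Ico 1 i, k t) : ℤ) : ℝ) := by
      rw [hfi, hfj]; push_cast; ring
    rw [hcast]
    have hpi := hpar i hi.1 hi.2
    have hpj := hpar j hj.1 hj.2
    rw [Nat.odd_iff, Nat.odd_iff] at hp
    have hne : ((∑ t ∈ Finset.Ico 1 j, k t) - (∑ t ∈ Finset.Ico 1 i, k t) : ℤ) ≠ 0 := by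
      omega
    have h1 : (1:ℤ) ≤ ((∑ t ∈ Finset.Ico 1 j, k t) - (∑ t ∈ Finset.Ico 1 i, k t))^2 := by
      nlinarith [Int.one_le_abs hne, sq_abs ((∑ t ∈ Finset.Ico 1 j, k t) - (∑ t ∈ Finset.Ico 1 i, k t)), abs_nonneg ((∑ t ∈ Finset.Ico 1 j, k t) - (∑ t ∈ Finset.Ico 1 i, k t))]
    exact_mod_cast h1
  -- double sum identity
  have hD : ∑ i ∈ Finset.Icc 1 m, ∑ j ∈ Finset.Icc 1 m, (μ i - μ j)^2
      = 2 * m * (∑ i ∈ Finset.Icc 1 m, μ i ^ 2) := by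
    rw [double_sum_sq, hμsum]
    simp [Nat.card_Icc]
  -- split into four parts
  have hsplit : ∑ i ∈ Finset.Icc 1 m, ∑ j ∈ Finset.Icc 1 m, (μ i - μ j)^2
      = (∑ i ∈ A, ∑ j ∈ A, (μ i - μ j)^2) + (∑ i ∈ A, ∑ j ∈ B, (μ i - μ j)^2)
        + ((∑ i ∈ B, ∑ j ∈ A, (μ i - μ j)^2) + (∑ i ∈ B, ∑ j ∈ B, (μ i - μ j)^2)) := by
    rw [← Finset.sum_filter_add_sum_filter_not (Finset.Icc 1 m) (fun i => Odd i)
      (fun i => ∑ j ∈ Finset.Icc 1 m, (μ i - μ j)^2)]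
    congr 1
    · rw [← Finset.sum_add_distrib]
      refine Finset.sum_congr rfl fun i _ => ?_
      rw [← Finset.sum_filter_add_sum_filter_not (Finset.Icc 1 m) (fun j => Odd j)]
    · rw [← Finset.sum_add_distrib]
      refine Finset.sum_congr rfl fun i _ => ?_
      rw [← Finset.sum_filter_add_sum_filter_not (Finset.Icc 1 m) (fun j => Odd j)]
  -- bounds on the four parts
  have memA : ∀ i ∈ A, i ∈ Finset.Icc 1 m ∧ Odd i := by
    intro i hi; rw [hA, Finset.mem_filter] at hi; exact hi
  have memB : ∀ i ∈ B, i ∈ Finset.Icc 1 m ∧ ¬ Odd i := by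
    intro i hi; rw [hB, Finset.mem_filter] at hi; exact hi
  have hAB : (A.card * B.card : ℝ) ≤ ∑ i ∈ A, ∑ j ∈ B, (μ i - μ j)^2 := by
    have : (A.card * B.card : ℝ) = ∑ i ∈ A, ∑ j ∈ B, (1:ℝ) := by
      simp [Finset.sum_const]
    rw [this]
    refine Finset.sum_le_sum fun i hi => Finset.sum_le_sum fun j hj => ?_
    exact hodd_diff i (memA i hi).1 j (memB j hj).1
      (iff_of_true (memA i hi).2 (memB j hj).2)
  have hBA : (A.card * B.card : ℝ) ≤ ∑ i ∈ B, ∑ j ∈ A, (μ i - μ j)^2 := by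
    have : (A.card * B.card : ℝ) = ∑ i ∈ B, ∑ j ∈ A, (1:ℝ) := by
      simp [Finset.sum_const]; ring
    rw [this]
    refine Finset.sum_le_sum fun i hi => Finset.sum_le_sum fun j hj => ?_
    exact hodd_diff i (memB i hi).1 j (memA j hj).1
      (iff_of_false (memB i hi).2 (not_not_intro (memA j hj).2))
  have hAA : (0:ℝ) ≤ ∑ i ∈ A, ∑ j ∈ A, (μ i - μ j)^2 :=
    Finset.sum_nonneg fun i _ => Finset.sum_nonneg fun j _ => sq_nonneg _
  have hBB : (0:ℝ) ≤ ∑ i ∈ B, ∑ j ∈ B, (μ i - μ j)^2 :=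
    Finset.sum_nonneg fun i _ => Finset.sum_nonneg fun j _ => sq_nonneg _
  -- part 1
  have hmain : ∑ i ∈ Finset.Icc 1 m, ν i ^ 2 ≤ ∑ i ∈ Finset.Icc 1 m, μ i ^ 2 := by
    rw [hν, div_le_iff₀ hm0]
    linarith [hD, hsplit, hAB, hBA, hAA, hBB]
  refine ⟨hmain, ?_, ?_⟩
  · -- equality → alternating
    intro heq
    have hDval : ∑ i ∈ Finset.Icc 1 m, ∑ j ∈ Finset.Icc 1 m, (μ i - μ j)^2
        = 2 * (A.card * B.card : ℝ) := by
      rw [hD, heq, hν]; field_simp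
    have hAA0 : ∑ i ∈ A, ∑ j ∈ A, (μ i - μ j)^2 = 0 := by
      linarith [hsplit, hDval, hAB, hBA, hBB]
    have hBB0 : ∑ i ∈ B, ∑ j ∈ B, (μ i - μ j)^2 = 0 := by
      linarith [hsplit, hDval, hAB, hBA, hAA]
    have hABval : ∑ i ∈ A, ∑ j ∈ B, (μ i - μ j)^2 = (A.card * B.card : ℝ) := by
      linarith [hsplit, hDval, hBA, hAA, hBB, hAB]
    -- μ constant on A and on B
    have hconstA : ∀ i ∈ A, μ i = μ 1 := by
      intro i hi
      have h0 : ∀ x ∈ A, ∀ y ∈ A, (μ x - μ y)^2 = 0 := by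
        intro x hx y hy
        have h1 := (Finset.sum_eq_zero_iff_of_nonneg
          (fun x _ => Finset.sum_nonneg fun y _ => sq_nonneg (μ x - μ y))).mp hAA0 x hx
        have h2 := (Finset.sum_eq_zero_iff_of_nonneg
          (fun y _ => sq_nonneg (μ x - μ y))).mp h1 y hy
        exact h2
      have := h0 i hi 1 h1A
      have := sq_eq_zero_iff.mp this
      linarith
    have hconstB : ∀ i ∈ B, μ i = μ 2 := by
      intro i hi
      have h0 : ∀ x ∈ B, ∀ y ∈ B, (μ x - μ y)^2 = 0 := by
        intro x hx y hy
        have h1 := (Finset.sum_eq_zero_iff_of_nonneg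
          (fun x _ => Finset.sum_nonneg fun y _ => sq_nonneg (μ x - μ y))).mp hBB0 x hx
        have h2 := (Finset.sum_eq_zero_iff_of_nonneg
          (fun y _ => sq_nonneg (μ x - μ y))).mp h1 y hy
        exact h2
      have := h0 i hi 2 h2B
      have := sq_eq_zero_iff.mp this
      linarith
    -- (μ 1 - μ 2)^2 = 1
    have hsq1 : (μ 1 - μ 2)^2 = 1 := by
      have : ∑ i ∈ A, ∑ j ∈ B, (μ i - μ j)^2
          = (A.card * B.card : ℝ) * (μ 1 - μ 2)^2 := by
        rw [Finset.sum_congr rfl (fun i hi => Finset.sum_congr rfl (fun j hj => by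
          rw [hconstA i hi, hconstB j hj]))]
        simp [Finset.sum_const]
        ring
      rw [this] at hABval
      have hab : (0:ℝ) < (A.card * B.card : ℝ) := by
        have : (1:ℝ) ≤ (A.card : ℝ) := by exact_mod_cast hApos
        have : (1:ℝ) ≤ (B.card : ℝ) := by exact_mod_cast hBpos
        positivity
      exact mul_left_cancel₀ hab.ne' (by rw [mul_one, hABval])
    have hk1 : μ 1 - μ 2 = (k 1 : ℝ) := hμdiff 1 le_rfl (by omega)
    have hk1sq : (k 1)^2 = 1 := by
      have : ((k 1 : ℝ))^2 = 1 := by rw [← hk1]; exact hsq1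
      exact_mod_cast this
    have hk1val : k 1 = 1 ∨ k 1 = -1 := by
      have h := mul_eq_zero.mp (show (k 1 - 1) * (k 1 + 1) = 0 by linear_combination hk1sq)
      rcases h with h | h
      · left; omega
      · right; omega
    -- alternation
    have halt : ∀ i, 1 ≤ i → i ≤ m - 1 → k i = (-1)^(i+1) * k 1 := by
      intro i h1 h2
      have hiIcc : i ∈ Finset.Icc 1 m := by rw [Finset.mem_Icc]; omega
      have hi1Icc : i + 1 ∈ Finset.Icc 1 m := by rw [Finset.mem_Icc]; omega
      have hki : (k i : ℝ) = μ i - μ (i+1) := (hμdiff i h1 h2).symm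
      by_cases hoi : Odd i
      · have hiA : i ∈ A := by rw [hA, Finset.mem_filter]; exact ⟨hiIcc, hoi⟩
        have hi1B : i + 1 ∈ B := by
          rw [hB, Finset.mem_filter]
          exact ⟨hi1Icc, by simp [Nat.odd_add_one, hoi]⟩
        have : (k i : ℝ) = (k 1 : ℝ) := by
          rw [hki, hconstA i hiA, hconstB (i+1) hi1B, hk1]
        have hkk : k i = k 1 := by exact_mod_cast this
        have hev : Even (i + 1) := Odd.add_one hoi
        rw [hev.neg_one_pow, one_mul, hkk]
      · have hiB : i ∈ B := by rw [hB, Finset.mem_filter]; exact ⟨hiIcc, hoi⟩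
        have hi1A : i + 1 ∈ A := by
          rw [hA, Finset.mem_filter]
          exact ⟨hi1Icc, by simp [Nat.odd_add_one, hoi]⟩
        have : (k i : ℝ) = -(k 1 : ℝ) := by
          rw [hki, hconstB i hiB, hconstA (i+1) hi1A, ← hk1]; ring
        have hkk : k i = -(k 1) := by exact_mod_cast this
        have hev : Odd (i + 1) := Even.add_one (Nat.not_odd_iff_even.mp hoi)
        rw [hev.neg_one_pow, hkk]; ring
    rcases hk1val with h1 | h1
    · left; intro i hi1 hi2; rw [halt i hi1 hi2, h1, mul_one]
    · right; intro i hi1 hi2; rw [halt i hi1 hi2, h1, pow_succ]; ring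
  · -- alternating → equality
    rintro (h | h)
    · have := alt_val m hm 1 μ hμsum (by
        intro i h1 h2
        rw [hμdiff i h1 h2, h i h1 h2, one_mul]
        push_cast; ring)
      rw [this, hν, hA, hB]; push_cast; ring
    · have := alt_val m hm (-1) μ hμsum (by
        intro i h1 h2
        rw [hμdiff i h1 h2, h i h1 h2]
        push_cast; ring)
      rw [this, hν, hA, hB]; push_cast; ring
end

section
/- Let m ≥ 2. For each tuple k = (k₁, …, k_{m−1}) of integers, let μ(k) ∈ ℝ^{m} be the unique vector with Σ_{i=1}^{m} μᵢ = m(m−1)/4 and μᵢ − μ_{i+1} = kᵢ for i = 1, …, m−1, and set G(k) := Σ_{i=1}^{m} (μᵢ(k)² + i·μᵢ(k)). Then G attains its minimum over all integer tuples exactly at the two alternating tuples k = (1, 0, 1, 0, …) (i.e. kᵢ = 1 for i odd, kᵢ = 0 for i even) and k = (0, 1, 0, 1, …) (i.e. kᵢ = 0 for i odd, kᵢ = 1 for i even); that is, G(k) ≥ G((1,0,1,…)) for every integer tuple k, with equality if and only if k is one of these two tuples. -/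
noncomputable def cfun (i : ℕ) : ℝ := if Odd i then 1 else 0

lemma cfun_one : cfun 1 = 1 := by simp [cfun]

lemma cfun_two : cfun 2 = 0 := by simp [cfun]

lemma cfun_succ (i : ℕ) : cfun (i + 1) = 1 - cfun i := by
  by_cases h : Odd i <;>
    simp [cfun, h, Nat.odd_add_one, Nat.not_odd_iff_even]

lemma cfun_parity {i j : ℕ} (h : Odd i ↔ Odd j) : cfun i = cfun j := by
  by_cases hi : Odd i
  · simp [cfun, hi, h.mp hi]
  · have hj : ¬ Odd j := fun hj => hi (h.mpr hj)
    simp [cfun, hi, hj]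

lemma abs_cfun_sub (i j : ℕ) : |cfun i - cfun j| ≤ 1 := by
  by_cases hi : Odd i <;> by_cases hj : Odd j <;> simp [cfun, hi, hj]

lemma aux_nonneg (d : ℤ) (γ : ℝ) (hγ : |γ| ≤ 1) : 0 ≤ (d : ℝ) ^ 2 + γ * (d : ℝ) := by
  rcases eq_or_ne d 0 with rfl | hd
  · simp
  · have h1 : (1 : ℝ) ≤ |(d : ℝ)| := by
      rw [← Int.cast_abs]
      exact_mod_cast Int.one_le_abs hd
    have h2 : -(γ * (d : ℝ)) ≤ |(d : ℝ)| := by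
      calc -(γ * (d : ℝ)) ≤ |γ * (d : ℝ)| := neg_le_abs _
        _ = |γ| * |(d : ℝ)| := abs_mul _ _
        _ ≤ 1 * |(d : ℝ)| := by
            apply mul_le_mul_of_nonneg_right hγ (abs_nonneg _)
        _ = |(d : ℝ)| := one_mul _
    nlinarith [sq_abs ((d : ℝ))]

lemma double_sum_id (I : Finset ℕ) (e : ℕ → ℝ) (he : ∑ i ∈ I, e i = 0) :
    ∑ i ∈ I, ∑ j ∈ I, ((e i - e j) ^ 2 + (cfun i - cfun j) * (e i - e j))
      = 2 * I.card * ∑ i ∈ I, (e i ^ 2 + cfun i * e i) := by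
  have inner : ∀ i, ∑ j ∈ I, ((e i - e j) ^ 2 + (cfun i - cfun j) * (e i - e j))
      = (I.card : ℝ) * (e i ^ 2 + cfun i * e i) + ∑ j ∈ I, (e j ^ 2 + cfun j * e j)
        - (∑ j ∈ I, cfun j) * e i := by
    intro i
    have step : ∀ j, (e i - e j) ^ 2 + (cfun i - cfun j) * (e i - e j)
        = ((e i ^ 2 + cfun i * e i) + (e j ^ 2 + cfun j * e j))
          - ((2 * e i + cfun i) * e j + cfun j * e i) := by
      intro j; ring
    rw [Finset.sum_congr rfl fun j _ => step j]
    simp only [Finset.sum_sub_distrib, Finset.sum_add_distrib, Finset.sum_const,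
      nsmul_eq_mul, ← Finset.mul_sum, ← Finset.sum_mul]
    rw [he]
    ring
  rw [Finset.sum_congr rfl fun i _ => inner i]
  simp only [Finset.sum_sub_distrib, Finset.sum_add_distrib, Finset.sum_const,
    nsmul_eq_mul, ← Finset.mul_sum, ← Finset.sum_mul]
  rw [he]
  ring

/-- Let `m ≥ 2`. For a tuple `k = (k₁, …, k_{m−1})` of integers let `μ ∈ ℝ^m`
be the unique vector with `Σ_{i=1}^m μᵢ = m(m−1)/4` and `μᵢ − μ_{i+1} = kᵢ`, and set
`G(k) := Σ_{i=1}^m (μᵢ² + i·μᵢ)`; let `ν` be the corresponding vector for the alternating tuple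
`(1, 0, 1, 0, …)`. Then `G(ν-tuple) ≤ G(k)`, with equality if and only if `k` is one of the two
alternating tuples `(1, 0, 1, 0, …)` or `(0, 1, 0, 1, …)`. -/
theorem stmt_6 (m : ℕ) (hm : 2 ≤ m)
    (k : ℕ → ℤ)
    (μ ν : ℕ → ℝ)
    (hμsum : ∑ i ∈ Finset.Icc 1 m, μ i = (m : ℝ) * ((m : ℝ) - 1) / 4)
    (hμdiff : ∀ i, 1 ≤ i → i ≤ m - 1 → μ i - μ (i + 1) = (k i : ℝ))
    (hνsum : ∑ i ∈ Finset.Icc 1 m, ν i = (m : ℝ) * ((m : ℝ) - 1) / 4)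
    (hνdiff : ∀ i, 1 ≤ i → i ≤ m - 1 → ν i - ν (i + 1) = if Odd i then 1 else 0) :
    (∑ i ∈ Finset.Icc 1 m, (ν i ^ 2 + (i : ℝ) * ν i)) ≤
      (∑ i ∈ Finset.Icc 1 m, (μ i ^ 2 + (i : ℝ) * μ i)) ∧
    ((∑ i ∈ Finset.Icc 1 m, (μ i ^ 2 + (i : ℝ) * μ i)) =
        (∑ i ∈ Finset.Icc 1 m, (ν i ^ 2 + (i : ℝ) * ν i)) ↔
      (∀ i, 1 ≤ i → i ≤ m - 1 → k i = if Odd i then 1 else 0) ∨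
      (∀ i, 1 ≤ i → i ≤ m - 1 → k i = if Odd i then 0 else 1)) := by
  have hmR : (2 : ℝ) ≤ (m : ℝ) := by exact_mod_cast hm
  set e : ℕ → ℝ := fun i => μ i - ν i with he_def
  have hcν : ∀ i, 1 ≤ i → i ≤ m - 1 → ν i - ν (i + 1) = cfun i := by
    intro i h1 h2
    rw [hνdiff i h1 h2]
    simp [cfun]
  have he_diff : ∀ i, 1 ≤ i → i ≤ m - 1 → e i - e (i + 1) = (k i : ℝ) - cfun i := by
    intro i h1 h2
    have h3 := hμdiff i h1 h2
    have h4 := hcν i h1 h2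
    simp only [he_def]
    linarith
  have he_sum : ∑ i ∈ Finset.Icc 1 m, e i = 0 := by
    simp only [he_def]
    rw [Finset.sum_sub_distrib, hμsum, hνsum]
    ring
  have hν2 : ∀ i, 1 ≤ i → i ≤ m → 2 * ν i + (i : ℝ) = 2 * ν 1 + cfun i := by
    intro i h1
    induction i, h1 using Nat.le_induction with
    | base => intro _; rw [cfun_one]; norm_num
    | succ n hn ih =>
      intro hnm
      have hcd := hcν n hn (by omega)
      have hih := ih (by omega)
      rw [cfun_succ]
      push_cast
      linarith
  have he_int : ∀ i, 1 ≤ i → i ≤ m → ∃ d : ℤ, e i - e 1 = (d : ℝ) := by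
    intro i h1
    induction i, h1 using Nat.le_induction with
    | base => intro _; exact ⟨0, by simp⟩
    | succ n hn ih =>
      intro hnm
      obtain ⟨d, hd⟩ := ih (by omega)
      have hdd := he_diff n hn (by omega)
      by_cases hodd : Odd n
      · refine ⟨d - (k n - 1), ?_⟩
        have hc : cfun n = 1 := by simp [cfun, hodd]
        push_cast
        linarith
      · refine ⟨d - k n, ?_⟩
        have hc : cfun n = 0 := by simp [cfun, hodd]
        push_cast
        linarith
  have he_int2 : ∀ i ∈ Finset.Icc 1 m, ∀ j ∈ Finset.Icc 1 m,
      ∃ d : ℤ, e i - e j = (d : ℝ) := by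
    intro i hi j hj
    rw [Finset.mem_Icc] at hi hj
    obtain ⟨di, hdi⟩ := he_int i hi.1 hi.2
    obtain ⟨dj, hdj⟩ := he_int j hj.1 hj.2
    exact ⟨di - dj, by push_cast; linarith⟩
  have hΔ' : ∑ i ∈ Finset.Icc 1 m, (μ i ^ 2 + (i : ℝ) * μ i)
      = ∑ i ∈ Finset.Icc 1 m, (ν i ^ 2 + (i : ℝ) * ν i)
        + ∑ i ∈ Finset.Icc 1 m, (e i ^ 2 + cfun i * e i) := by
    have hpt : ∀ i ∈ Finset.Icc 1 m, μ i ^ 2 + (i : ℝ) * μ i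
        = ((ν i ^ 2 + (i : ℝ) * ν i) + (e i ^ 2 + cfun i * e i)) + 2 * ν 1 * e i := by
      intro i hi
      rw [Finset.mem_Icc] at hi
      have h2 := hν2 i hi.1 hi.2
      have hμe : μ i = ν i + e i := by simp only [he_def]; ring
      rw [hμe]
      linear_combination (e i) * h2
    rw [Finset.sum_congr rfl hpt, Finset.sum_add_distrib, ← Finset.mul_sum, he_sum,
      mul_zero, add_zero, Finset.sum_add_distrib]
  have hcard : (Finset.Icc 1 m).card = m := by rw [Nat.card_Icc]; omega
  have hkey := double_sum_id (Finset.Icc 1 m) e he_sum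
  rw [hcard] at hkey
  have hterm : ∀ i ∈ Finset.Icc 1 m, ∀ j ∈ Finset.Icc 1 m,
      0 ≤ (e i - e j) ^ 2 + (cfun i - cfun j) * (e i - e j) := by
    intro i hi j hj
    obtain ⟨d, hd⟩ := he_int2 i hi j hj
    rw [hd]
    exact aux_nonneg d _ (abs_cfun_sub i j)
  have hS_nonneg : (0 : ℝ) ≤ ∑ i ∈ Finset.Icc 1 m, ∑ j ∈ Finset.Icc 1 m,
      ((e i - e j) ^ 2 + (cfun i - cfun j) * (e i - e j)) :=
    Finset.sum_nonneg fun i hi => Finset.sum_nonneg fun j hj => hterm i hi j hj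
  have hΔ_nonneg : (0 : ℝ) ≤ ∑ i ∈ Finset.Icc 1 m, (e i ^ 2 + cfun i * e i) := by
    rw [hkey] at hS_nonneg
    nlinarith [hS_nonneg, hmR]
  have h1I : (1 : ℕ) ∈ Finset.Icc 1 m := by rw [Finset.mem_Icc]; omega
  have h2I : (2 : ℕ) ∈ Finset.Icc 1 m := by rw [Finset.mem_Icc]; omega
  refine ⟨by linarith, ?_⟩
  constructor
  · -- equality → alternating tuples
    intro heq
    have hΔ0 : ∑ i ∈ Finset.Icc 1 m, (e i ^ 2 + cfun i * e i) = 0 := by linarith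
    have hSz : ∑ i ∈ Finset.Icc 1 m, ∑ j ∈ Finset.Icc 1 m,
        ((e i - e j) ^ 2 + (cfun i - cfun j) * (e i - e j)) = 0 := by
      rw [hkey, hΔ0, mul_zero]
    have hterm0 : ∀ i ∈ Finset.Icc 1 m, ∀ j ∈ Finset.Icc 1 m,
        (e i - e j) ^ 2 + (cfun i - cfun j) * (e i - e j) = 0 := by
      intro i hi j hj
      have h1 := (Finset.sum_eq_zero_iff_of_nonneg
        (fun i hi => Finset.sum_nonneg fun j hj => hterm i hi j hj)).mp hSz i hi
      exact (Finset.sum_eq_zero_iff_of_nonneg (fun j hj => hterm i hi j hj)).mp h1 j hj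
    have hpar : ∀ i ∈ Finset.Icc 1 m, ∀ j ∈ Finset.Icc 1 m, (Odd i ↔ Odd j) → e i = e j := by
      intro i hi j hj hp
      have h0 := hterm0 i hi j hj
      rw [cfun_parity hp, sub_self, zero_mul, add_zero] at h0
      have := pow_eq_zero_iff (two_ne_zero) |>.mp h0
      linarith [sub_eq_zero.mp this]
    obtain ⟨d, hd⟩ := he_int2 1 h1I 2 h2I
    have h12 := hterm0 1 h1I 2 h2I
    rw [cfun_one, cfun_two, hd] at h12
    have hdz : d * (d + 1) = 0 := by
      have hR : (d : ℝ) * ((d : ℝ) + 1) = 0 := by linear_combination h12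
      exact_mod_cast hR
    have hkrel : ∀ i, 1 ≤ i → i ≤ m - 1 → (k i : ℝ) = e i - e (i + 1) + cfun i := by
      intro i h1 h2
      linarith [he_diff i h1 h2]
    rcases mul_eq_zero.mp hdz with hd0 | hd1
    · left
      intro i h1 h2
      have hiI : i ∈ Finset.Icc 1 m := by rw [Finset.mem_Icc]; omega
      have hi1I : i + 1 ∈ Finset.Icc 1 m := by rw [Finset.mem_Icc]; omega
      have hd0R : e 1 - e 2 = 0 := by rw [hd, hd0]; norm_num
      by_cases hodd : Odd i
      · have hodd1 : ¬ Odd (i + 1) := by rw [Nat.odd_iff] at *; omega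
        have e1 : e i = e 1 := hpar i hiI 1 h1I (iff_of_true hodd odd_one)
        have e2 : e (i + 1) = e 2 := hpar (i + 1) hi1I 2 h2I (iff_of_false hodd1 (by decide))
        have hc : cfun i = 1 := by simp [cfun, hodd]
        rw [if_pos hodd]
        have : (k i : ℝ) = 1 := by rw [hkrel i h1 h2, e1, e2, hc]; linarith
        exact_mod_cast this
      · have hodd1 : Odd (i + 1) := by rw [Nat.odd_iff] at *; omega
        have e1 : e i = e 2 := hpar i hiI 2 h2I (iff_of_false hodd (by decide))
        have e2 : e (i + 1) = e 1 := hpar (i + 1) hi1I 1 h1I (iff_of_true hodd1 odd_one)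
        have hc : cfun i = 0 := by simp [cfun, hodd]
        rw [if_neg hodd]
        have : (k i : ℝ) = 0 := by rw [hkrel i h1 h2, e1, e2, hc]; linarith
        exact_mod_cast this
    · have hd1' : d = -1 := by omega
      right
      intro i h1 h2
      have hiI : i ∈ Finset.Icc 1 m := by rw [Finset.mem_Icc]; omega
      have hi1I : i + 1 ∈ Finset.Icc 1 m := by rw [Finset.mem_Icc]; omega
      have hd0R : e 1 - e 2 = -1 := by rw [hd, hd1']; norm_num
      by_cases hodd : Odd i
      · have hodd1 : ¬ Odd (i + 1) := by rw [Nat.odd_iff] at *; omega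
        have e1 : e i = e 1 := hpar i hiI 1 h1I (iff_of_true hodd odd_one)
        have e2 : e (i + 1) = e 2 := hpar (i + 1) hi1I 2 h2I (iff_of_false hodd1 (by decide))
        have hc : cfun i = 1 := by simp [cfun, hodd]
        rw [if_pos hodd]
        have : (k i : ℝ) = 0 := by rw [hkrel i h1 h2, e1, e2, hc]; linarith
        exact_mod_cast this
      · have hodd1 : Odd (i + 1) := by rw [Nat.odd_iff] at *; omega
        have e1 : e i = e 2 := hpar i hiI 2 h2I (iff_of_false hodd (by decide))
        have e2 : e (i + 1) = e 1 := hpar (i + 1) hi1I 1 h1I (iff_of_true hodd1 odd_one)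
        have hc : cfun i = 0 := by simp [cfun, hodd]
        rw [if_neg hodd]
        have : (k i : ℝ) = 1 := by rw [hkrel i h1 h2, e1, e2, hc]; linarith
        exact_mod_cast this
  · -- alternating tuples → equality
    rintro (hk | hk)
    · -- k i = if Odd i then 1 else 0 : then e is constant, hence 0
      have hE : ∀ i, 1 ≤ i → i ≤ m → e i = e 1 := by
        intro i h1
        induction i, h1 using Nat.le_induction with
        | base => intro _; rfl
        | succ n hn ih =>
          intro hnm
          have hdn := he_diff n hn (by omega)
          have hkn : (k n : ℝ) = cfun n := by
            rw [hk n hn (by omega)]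
            by_cases h : Odd n <;> simp [cfun, h]
          rw [← ih (by omega)]
          linarith
      have he1 : e 1 = 0 := by
        have hs : ∑ i ∈ Finset.Icc 1 m, e i = (m : ℝ) * e 1 := by
          rw [Finset.sum_congr rfl fun i hi => hE i (Finset.mem_Icc.mp hi).1
            (Finset.mem_Icc.mp hi).2, Finset.sum_const, hcard, nsmul_eq_mul]
        rw [he_sum] at hs
        have hmne : (m : ℝ) ≠ 0 := by linarith
        rcases mul_eq_zero.mp hs.symm with h | h
        · exact absurd h hmne
        · exact h
      rw [hΔ']
      have : ∑ i ∈ Finset.Icc 1 m, (e i ^ 2 + cfun i * e i) = 0 := by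
        apply Finset.sum_eq_zero
        intro i hi
        rw [Finset.mem_Icc] at hi
        rw [hE i hi.1 hi.2, he1]
        ring
      rw [this, add_zero]
    · -- k i = if Odd i then 0 else 1
      have hE : ∀ i, 1 ≤ i → i ≤ m → e i = e 1 + 1 - cfun i := by
        intro i h1
        induction i, h1 using Nat.le_induction with
        | base => intro _; rw [cfun_one]; ring
        | succ n hn ih =>
          intro hnm
          have hdn := he_diff n hn (by omega)
          have hkn : (k n : ℝ) = 1 - cfun n := by
            rw [hk n hn (by omega)]
            by_cases h : Odd n <;> simp [cfun, h]
          have hihn := ih (by omega)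
          rw [cfun_succ]
          linarith
      rw [hΔ']
      have hpt : ∀ i ∈ Finset.Icc 1 m, e i ^ 2 + cfun i * e i = (e 1 + 1) * e i := by
        intro i hi
        rw [Finset.mem_Icc] at hi
        have hEi := hE i hi.1 hi.2
        linear_combination (e i) * hEi
      have : ∑ i ∈ Finset.Icc 1 m, (e i ^ 2 + cfun i * e i) = 0 := by
        rw [Finset.sum_congr rfl hpt, ← Finset.mul_sum, he_sum, mul_zero]
      rw [this, add_zero]
end

section
/- In the compact setting described in the context, for every root α ∈ Φ₃ there exists X ∈ 𝔱_K with α(X) ≠ 0; in other words, the restriction α|_{𝔱_K} is nonzero. -/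
open scoped TensorProduct

namespace Stmt11Aux

variable {L : Type*} [LieRing L] [LieAlgebra ℝ L]

lemma lieC_add (x w1 w2 : ℂ ⊗[ℝ] L) : ⁅x, w1 + w2⁆ = ⁅x, w1⁆ + ⁅x, w2⁆ :=
  @lie_add (ℂ ⊗[ℝ] L) (ℂ ⊗[ℝ] L) _ _ (LieAlgebra.ExtendScalars.instLieRingModule ℝ ℂ L L) _ _ _

lemma lieC_zero (x : ℂ ⊗[ℝ] L) : ⁅x, (0 : ℂ ⊗[ℝ] L)⁆ = 0 :=
  @lie_zero (ℂ ⊗[ℝ] L) (ℂ ⊗[ℝ] L) _ _ (LieAlgebra.ExtendScalars.instLieRingModule ℝ ℂ L L) _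

noncomputable def fre : ℂ ⊗[ℝ] L →ₗ[ℝ] L :=
  TensorProduct.lift ((LinearMap.lsmul ℝ L).comp Complex.reLm)

noncomputable def fim : ℂ ⊗[ℝ] L →ₗ[ℝ] L :=
  TensorProduct.lift ((LinearMap.lsmul ℝ L).comp Complex.imLm)

@[simp] lemma fre_tmul (c : ℂ) (x : L) : fre (c ⊗ₜ[ℝ] x) = c.re • x := rfl
@[simp] lemma fim_tmul (c : ℂ) (x : L) : fim (c ⊗ₜ[ℝ] x) = c.im • x := rfl

lemma real_smul_eq (r : ℝ) (w : ℂ ⊗[ℝ] L) : r • w = (r : ℂ) • w :=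
  (algebraMap_smul ℂ r w).symm

lemma decompose (w : ℂ ⊗[ℝ] L) :
    w = (1 : ℂ) ⊗ₜ[ℝ] fre w + Complex.I ⊗ₜ[ℝ] fim w := by
  induction w using TensorProduct.induction_on with
  | zero => simp
  | tmul c x =>
      rw [fre_tmul, fim_tmul, TensorProduct.tmul_smul, TensorProduct.tmul_smul,
        real_smul_eq, real_smul_eq, TensorProduct.smul_tmul', TensorProduct.smul_tmul',
        smul_eq_mul, smul_eq_mul, mul_one, ← TensorProduct.add_tmul]
      congr 1
      exact (Complex.re_add_im c).symm
  | add w1 w2 h1 h2 =>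
      rw [map_add, map_add, TensorProduct.tmul_add, TensorProduct.tmul_add]
      conv_lhs => rw [h1, h2]
      abel

lemma fre_bracket (H : L) (w : ℂ ⊗[ℝ] L) :
    fre ⁅(1 : ℂ) ⊗ₜ[ℝ] H, w⁆ = ⁅H, fre w⁆ := by
  induction w using TensorProduct.induction_on with
  | zero => rw [lieC_zero, map_zero, lie_zero]
  | tmul c x =>
      rw [LieAlgebra.ExtendScalars.bracket_tmul, fre_tmul, fre_tmul, one_mul, lie_smul]
  | add w1 w2 h1 h2 => rw [lieC_add, map_add, map_add, h1, h2, lie_add]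

lemma fim_bracket (H : L) (w : ℂ ⊗[ℝ] L) :
    fim ⁅(1 : ℂ) ⊗ₜ[ℝ] H, w⁆ = ⁅H, fim w⁆ := by
  induction w using TensorProduct.induction_on with
  | zero => rw [lieC_zero, map_zero, lie_zero]
  | tmul c x =>
      rw [LieAlgebra.ExtendScalars.bracket_tmul, fim_tmul, fim_tmul, one_mul, lie_smul]
  | add w1 w2 h1 h2 => rw [lieC_add, map_add, map_add, h1, h2, lie_add]

lemma fre_csmul (c : ℂ) (w : ℂ ⊗[ℝ] L) :
    fre (c • w) = c.re • fre w - c.im • fim w := by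
  induction w using TensorProduct.induction_on with
  | zero => simp
  | tmul a x =>
      rw [TensorProduct.smul_tmul', smul_eq_mul, fre_tmul, fre_tmul, fim_tmul,
        Complex.mul_re, sub_smul, smul_smul, smul_smul]
  | add w1 w2 h1 h2 =>
      rw [smul_add, map_add, map_add, map_add, h1, h2]; module

lemma fim_csmul (c : ℂ) (w : ℂ ⊗[ℝ] L) :
    fim (c • w) = c.re • fim w + c.im • fre w := by
  induction w using TensorProduct.induction_on with
  | zero => simp
  | tmul a x =>
      rw [TensorProduct.smul_tmul', smul_eq_mul, fim_tmul, fim_tmul, fre_tmul,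
        Complex.mul_im, add_smul, smul_smul, smul_smul, add_comm]
  | add w1 w2 h1 h2 =>
      rw [smul_add, map_add, map_add, map_add, h1, h2]; module

lemma mem_of_mem_baseChange (k : Submodule ℝ L) {w : ℂ ⊗[ℝ] L}
    (hw : w ∈ k.baseChange ℂ) : fre w ∈ k ∧ fim w ∈ k := by
  rw [Submodule.baseChange_eq_span] at hw
  induction hw using Submodule.span_induction with
  | mem x hx =>
      obtain ⟨m, hm, rfl⟩ := hx
      constructor
      · show fre ((1 : ℂ) ⊗ₜ[ℝ] m) ∈ k
        rw [fre_tmul]; simpa using hm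
      · show fim ((1 : ℂ) ⊗ₜ[ℝ] m) ∈ k
        rw [fim_tmul]; simp
  | zero => simp
  | add x y _ _ hx hy =>
      exact ⟨by rw [map_add]; exact k.add_mem hx.1 hy.1,
             by rw [map_add]; exact k.add_mem hx.2 hy.2⟩
  | smul c x _ hx =>
      refine ⟨?_, ?_⟩
      · rw [fre_csmul]; exact k.sub_mem (k.smul_mem _ hx.1) (k.smul_mem _ hx.2)
      · rw [fim_csmul]; exact k.add_mem (k.smul_mem _ hx.2) (k.smul_mem _ hx.1)

lemma sigmaC_bracket (σ : L →ₗ⁅ℝ⁆ L) (H : L) (w : ℂ ⊗[ℝ] L) :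
    (σ.toLinearMap.baseChange ℂ) ⁅(1 : ℂ) ⊗ₜ[ℝ] H, w⁆ =
      ⁅(1 : ℂ) ⊗ₜ[ℝ] σ H, σ.toLinearMap.baseChange ℂ w⁆ := by
  induction w using TensorProduct.induction_on with
  | zero => rw [lieC_zero, map_zero, lieC_zero]
  | tmul c x =>
      rw [LieAlgebra.ExtendScalars.bracket_tmul, LinearMap.baseChange_tmul,
        LinearMap.baseChange_tmul, LieAlgebra.ExtendScalars.bracket_tmul]
      congr 1
      exact σ.map_lie H x
  | add w1 w2 h1 h2 => rw [lieC_add, map_add, map_add, h1, h2, lieC_add]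

lemma self_add_sigma_mem (σ : L →ₗ⁅ℝ⁆ L) (k : Submodule ℝ L)
    (hk : ∀ x, x ∈ k ↔ σ x = x) (hσinv : ∀ x, σ (σ x) = x) (w : ℂ ⊗[ℝ] L) :
    w + σ.toLinearMap.baseChange ℂ w ∈ k.baseChange ℂ := by
  induction w using TensorProduct.induction_on with
  | zero => simp
  | tmul c x =>
      rw [LinearMap.baseChange_tmul, ← TensorProduct.tmul_add]
      refine Submodule.tmul_mem_baseChange_of_mem c ?_
      rw [hk]
      show σ (x + σ x) = x + σ x
      rw [map_add σ, hσinv, add_comm]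
  | add w1 w2 h1 h2 =>
      rw [map_add]
      have h : w1 + w2 + (σ.toLinearMap.baseChange ℂ w1 + σ.toLinearMap.baseChange ℂ w2)
          = (w1 + σ.toLinearMap.baseChange ℂ w1) + (w2 + σ.toLinearMap.baseChange ℂ w2) := by
        abel
      rw [h]; exact Submodule.add_mem _ h1 h2

end Stmt11Aux




/-- The root space `𝔤_θ ⊆ 𝔤_ℂ = ℂ ⊗[ℝ] L` of an ℝ-linear map `θ : 𝔱 → ℂ`:
`{Z | [H, Z] = θ(H)·Z for all H ∈ 𝔱}`. -/
def rootSet {L : Type*} [LieRing L] [LieAlgebra ℝ L]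
    (t : Submodule ℝ L) (θ : t →ₗ[ℝ] ℂ) : Set (ℂ ⊗[ℝ] L) :=
  {Z | ∀ H : t, ⁅(1 : ℂ) ⊗ₜ[ℝ] (H : L), Z⁆ = θ H • Z}

/-- `θ ∈ Φ`: `θ` is a root, i.e. `θ ≠ 0` and `𝔤_θ ≠ 0`. -/
def IsRoot {L : Type*} [LieRing L] [LieAlgebra ℝ L]
    (t : Submodule ℝ L) (θ : t →ₗ[ℝ] ℂ) : Prop :=
  θ ≠ 0 ∧ ∃ Z ∈ rootSet t θ, Z ≠ 0

/-- `θ ∈ Φ₁`: `θ` is a root with `𝔤_θ ⊆ 𝔨_ℂ`. -/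
def IsRoot1 {L : Type*} [LieRing L] [LieAlgebra ℝ L]
    (t k : Submodule ℝ L) (θ : t →ₗ[ℝ] ℂ) : Prop :=
  IsRoot t θ ∧ rootSet t θ ⊆ (k.baseChange ℂ : Set (ℂ ⊗[ℝ] L))

/-- `θ ∈ Φ₂`: `θ` is a root with `𝔤_θ ⊆ 𝔭_ℂ`. -/
def IsRoot2 {L : Type*} [LieRing L] [LieAlgebra ℝ L]
    (t p : Submodule ℝ L) (θ : t →ₗ[ℝ] ℂ) : Prop :=
  IsRoot t θ ∧ rootSet t θ ⊆ (p.baseChange ℂ : Set (ℂ ⊗[ℝ] L))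

/-- `θ ∈ Φ₃ = Φ \ (Φ₁ ∪ Φ₂)`. -/
def IsRoot3 {L : Type*} [LieRing L] [LieAlgebra ℝ L]
    (t k p : Submodule ℝ L) (θ : t →ₗ[ℝ] ℂ) : Prop :=
  IsRoot t θ ∧ ¬IsRoot1 t k θ ∧ ¬IsRoot2 t p θ

/-- In the compact setting (`𝔤` a finite-dimensional real Lie algebra with
negative definite Killing form, `σ` an involutive automorphism with fixed subalgebra `𝔨` and
`(−1)`-eigenspace `𝔭`, `𝔱` a `σ`-stable maximal abelian subalgebra with `𝔱_K = 𝔱 ∩ 𝔨` maximal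
abelian in `𝔨` and `𝔱₀ = 𝔱 ∩ 𝔭`), for every root `α ∈ Φ₃` there exists `X ∈ 𝔱_K` with
`α(X) ≠ 0`. -/

theorem stmt_11 (L : Type*) [LieRing L] [LieAlgebra ℝ L] [Module.Finite ℝ L]
    (hkill : ∀ x : L, x ≠ 0 → killingForm ℝ L x x < 0)
    (σ : L →ₗ⁅ℝ⁆ L) (hσinv : ∀ x, σ (σ x) = x)
    (k p : Submodule ℝ L)
    (hk : ∀ x, x ∈ k ↔ σ x = x) (hp : ∀ x, x ∈ p ↔ σ x = -x)
    (t : Submodule ℝ L)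
    (htab : ∀ x ∈ t, ∀ y ∈ t, ⁅x, y⁆ = 0)
    (htmax : ∀ s : Submodule ℝ L, (∀ x ∈ s, ∀ y ∈ s, ⁅x, y⁆ = 0) → t ≤ s → s = t)
    (hσt : ∀ x ∈ t, σ x ∈ t)
    (tK t0 : Submodule ℝ L) (htK : tK = t ⊓ k) (ht0 : t0 = t ⊓ p)
    (htKmax : ∀ s : Submodule ℝ L, s ≤ k → (∀ x ∈ s, ∀ y ∈ s, ⁅x, y⁆ = 0) → tK ≤ s → s = tK) :
    ∀ α : t →ₗ[ℝ] ℂ, IsRoot3 t k p α → ∃ X : t, (X : L) ∈ tK ∧ α X ≠ 0 := by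
  intro α h3
  by_contra hcon
  push_neg at hcon
  apply h3.2.1
  refine ⟨h3.1, ?_⟩
  intro Z hZ
  have hZ' : ∀ H : t, ⁅(1 : ℂ) ⊗ₜ[ℝ] (H : L), Z⁆ = α H • Z := hZ
  set σC := σ.toLinearMap.baseChange ℂ with hσCdef
  have memt : ∀ z ∈ tK, z ∈ t := by
    intro z hz; rw [htK] at hz; exact hz.1
  -- α (σ H) = - α H
  have hσα : ∀ H : t, α ⟨σ (H : L), hσt _ H.2⟩ = - α H := by
    intro H
    have hmemt : (2⁻¹ : ℝ) • ((H : L) + σ (H : L)) ∈ t :=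
      t.smul_mem _ (t.add_mem H.2 (hσt _ H.2))
    set HK : t := ⟨(2⁻¹ : ℝ) • ((H : L) + σ (H : L)), hmemt⟩ with hHKdef
    have hKmem : (HK : L) ∈ tK := by
      rw [htK]
      refine Submodule.mem_inf.mpr ⟨hmemt, ?_⟩
      rw [hk]
      show σ ((2⁻¹ : ℝ) • ((H : L) + σ (H : L))) = (2⁻¹ : ℝ) • ((H : L) + σ (H : L))
      rw [map_smul σ, map_add σ, hσinv, add_comm]
    have hα0 : α HK = 0 := hcon HK hKmem
    have hrel : (⟨σ (H : L), hσt _ H.2⟩ : t) = (2 : ℝ) • HK - H := by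
      apply Subtype.ext
      show σ (H : L) = (2 : ℝ) • ((2⁻¹ : ℝ) • ((H : L) + σ (H : L))) - (H : L)
      module
    rw [hrel, map_sub, map_smul, hα0, smul_zero, zero_sub]
  -- σC Z is in the root space of -α
  have hW : ∀ H : t, ⁅(1 : ℂ) ⊗ₜ[ℝ] (H : L), σC Z⁆ = -α H • σC Z := by
    intro H
    have h1 := hZ' ⟨σ (H : L), hσt _ H.2⟩
    have h2 := congrArg σC h1
    rw [map_smul, hσCdef, Stmt11Aux.sigmaC_bracket σ (σ (H : L)) Z, hσinv] at h2
    rw [hσα H] at h2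
    exact h2
  set Zk := Z + σC Z with hZkdef
  have hZkmem : Zk ∈ k.baseChange ℂ := Stmt11Aux.self_add_sigma_mem σ k hk hσinv Z
  set u := Stmt11Aux.fre Zk with hudef
  set v := Stmt11Aux.fim Zk with hvdef
  obtain ⟨huk, hvk⟩ := Stmt11Aux.mem_of_mem_baseChange k hZkmem
  have hbr : ∀ H : t, ⁅(1 : ℂ) ⊗ₜ[ℝ] (H : L), Zk⁆ = α H • (Z - σC Z) := by
    intro H
    rw [hZkdef, Stmt11Aux.lieC_add, hZ' H, hW H]
    module
  have hK0 : ∀ x ∈ tK, ⁅x, u⁆ = 0 ∧ ⁅x, v⁆ = 0 := by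
    intro x hx
    have hxt : x ∈ t := memt x hx
    have hα : α ⟨x, hxt⟩ = 0 := hcon ⟨x, hxt⟩ hx
    have hb := hbr ⟨x, hxt⟩
    rw [hα, zero_smul] at hb
    constructor
    · have h := congrArg Stmt11Aux.fre hb
      rw [Stmt11Aux.fre_bracket] at h
      simpa using h
    · have h := congrArg Stmt11Aux.fim hb
      rw [Stmt11Aux.fim_bracket] at h
      simpa using h
  have key : ∀ w : L, w ∈ k → (∀ x ∈ tK, ⁅x, w⁆ = 0) → w ∈ tK := by
    intro w hwk hw0
    have hle : tK ⊔ Submodule.span ℝ {w} ≤ k := by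
      refine sup_le ?_ (Submodule.span_le.mpr ?_)
      · rw [htK]; exact inf_le_right
      · simpa using hwk
    have hab : ∀ x ∈ tK ⊔ Submodule.span ℝ {w}, ∀ y ∈ tK ⊔ Submodule.span ℝ {w},
        ⁅x, y⁆ = 0 := by
      intro x hx y hy
      rcases Submodule.mem_sup.mp hx with ⟨a, ha, x', hx', rfl⟩
      rcases Submodule.mem_span_singleton.mp hx' with ⟨r, rfl⟩
      rcases Submodule.mem_sup.mp hy with ⟨b, hb, y', hy', rfl⟩
      rcases Submodule.mem_span_singleton.mp hy' with ⟨s, rfl⟩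
      have h1 : ⁅a, b⁆ = 0 := htab a (memt a ha) b (memt b hb)
      have h2 : ⁅a, w⁆ = 0 := hw0 a ha
      have h3 : ⁅w, b⁆ = 0 := by rw [← lie_skew, hw0 b hb, neg_zero]
      simp [add_lie, lie_add, lie_smul, smul_lie, h1, h2, h3]
    have hs : tK ⊔ Submodule.span ℝ {w} = tK := htKmax _ hle hab le_sup_left
    have hmem : w ∈ tK ⊔ Submodule.span ℝ {w} :=
      Submodule.mem_sup_right (Submodule.mem_span_singleton_self w)
    rwa [hs] at hmem
  have hutK : u ∈ tK := key u huk fun x hx => (hK0 x hx).1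
  have hvtK : v ∈ tK := key v hvk fun x hx => (hK0 x hx).2
  have hut : u ∈ t := memt u hutK
  have hvt : v ∈ t := memt v hvtK
  have hZk0 : ∀ H : t, ⁅(1 : ℂ) ⊗ₜ[ℝ] (H : L), Zk⁆ = 0 := by
    intro H
    conv_lhs => rw [Stmt11Aux.decompose Zk]
    rw [Stmt11Aux.lieC_add, LieAlgebra.ExtendScalars.bracket_tmul,
      LieAlgebra.ExtendScalars.bracket_tmul, htab _ H.2 _ hut, htab _ H.2 _ hvt,
      TensorProduct.tmul_zero, TensorProduct.tmul_zero, add_zero]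
  obtain ⟨H0, hH0⟩ : ∃ H : t, α H ≠ 0 := by
    by_contra hc
    push_neg at hc
    exact h3.1.1 (LinearMap.ext fun H => by simpa using hc H)
  have hZp : Z - σC Z = 0 := by
    have hb := hbr H0
    rw [hZk0 H0] at hb
    rcases smul_eq_zero.mp hb.symm with h | h
    · exact absurd h hH0
    · exact h
  have hZfix : σC Z = Z := (sub_eq_zero.mp hZp).symm
  have hZeq : Z = (2⁻¹ : ℂ) • Zk := by
    rw [hZkdef, hZfix]
    module
  rw [hZeq]
  exact Submodule.smul_mem _ _ hZkmem
end

section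
/- In the compact setting described in the context, for every root α ∈ Φ the linear map σ*(α) := α ∘ σ|_𝔱 is again a root, i.e. σ*(α) ∈ Φ. Moreover: (1) if α ∈ Φ₁ ∪ Φ₂ then σ*(α) = α; and (2) if α ∈ Φ₃ then σ*(α) ≠ α and σ*(α) ≠ −α. -/
open scoped TensorProduct

/-- The involution `σ* : θ ↦ θ ∘ σ|_𝔱` on ℝ-linear maps `𝔱 → ℂ`, for a `σ`-stable
subalgebra `𝔱`. -/
noncomputable def sigmaStar {L : Type*} [LieRing L] [LieAlgebra ℝ L]
    (σ : L →ₗ⁅ℝ⁆ L) (t : Submodule ℝ L) (hσt : ∀ x ∈ t, σ x ∈ t)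
    (θ : t →ₗ[ℝ] ℂ) : t →ₗ[ℝ] ℂ :=
  θ.comp (σ.toLinearMap.restrict fun x hx => hσt x hx)

open Complex TensorProduct

section Chunk1
variable {L : Type*} [LieRing L] [LieAlgebra ℝ L]

/-- Real part map `ℂ ⊗[ℝ] L →ₗ[ℝ] L`. -/
noncomputable def ReL (L : Type*) [AddCommGroup L] [Module ℝ L] : (ℂ ⊗[ℝ] L) →ₗ[ℝ] L :=
  (TensorProduct.lid ℝ L).toLinearMap ∘ₗ (Complex.reLm.rTensor L)

noncomputable def ImL (L : Type*) [AddCommGroup L] [Module ℝ L] : (ℂ ⊗[ℝ] L) →ₗ[ℝ] L :=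
  (TensorProduct.lid ℝ L).toLinearMap ∘ₗ (Complex.imLm.rTensor L)

@[simp] lemma ReL_tmul (c : ℂ) (x : L) : ReL L (c ⊗ₜ[ℝ] x) = c.re • x := by
  simp [ReL]

@[simp] lemma ImL_tmul (c : ℂ) (x : L) : ImL L (c ⊗ₜ[ℝ] x) = c.im • x := by
  simp [ImL]

lemma reim_repr (z : ℂ ⊗[ℝ] L) :
    (1 : ℂ) ⊗ₜ[ℝ] (ReL L z) + Complex.I ⊗ₜ[ℝ] (ImL L z) = z := by
  induction z using TensorProduct.induction_on with
  | zero => simp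
  | tmul c x =>
      rw [ReL_tmul, ImL_tmul, tmul_smul, tmul_smul, smul_tmul', smul_tmul', ← add_tmul]
      congr 1
      simp [Complex.real_smul, Complex.re_add_im]
  | add z w hz hw =>
      rw [map_add, map_add, tmul_add, tmul_add]
      conv_rhs => rw [← hz, ← hw]
      abel

lemma reim_eq_zero {u v : L} (h : (1:ℂ) ⊗ₜ[ℝ] u + Complex.I ⊗ₜ[ℝ] v = 0) : u = 0 ∧ v = 0 := by
  constructor
  · have := congrArg (ReL L) h; simpa using this
  · have := congrArg (ImL L) h; simpa using this

lemma reim_inj {u v u' v' : L}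
    (h : (1:ℂ) ⊗ₜ[ℝ] u + Complex.I ⊗ₜ[ℝ] v = (1:ℂ) ⊗ₜ[ℝ] u' + Complex.I ⊗ₜ[ℝ] v') :
    u = u' ∧ v = v' := by
  have h2 : (1:ℂ) ⊗ₜ[ℝ] (u - u') + Complex.I ⊗ₜ[ℝ] (v - v') = 0 := by
    rw [tmul_sub, tmul_sub]
    rw [← sub_eq_zero] at h
    rw [← h]; abel
  obtain ⟨h3, h4⟩ := reim_eq_zero h2
  constructor <;> [skip; skip] <;> rw [← sub_eq_zero] <;> assumption

end Chunk1

section Bridge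
variable {L : Type*} [LieRing L] [LieAlgebra ℝ L]

lemma my_lie_add (x m n : ℂ ⊗[ℝ] L) : ⁅x, m + n⁆ = ⁅x, m⁆ + ⁅x, n⁆ := lie_add x m n
lemma my_add_lie (x y m : ℂ ⊗[ℝ] L) : ⁅x + y, m⁆ = ⁅x, m⁆ + ⁅y, m⁆ := add_lie x y m
lemma my_lie_sub (x m n : ℂ ⊗[ℝ] L) : ⁅x, m - n⁆ = ⁅x, m⁆ - ⁅x, n⁆ := lie_sub x m n
lemma my_lie_neg (x m : ℂ ⊗[ℝ] L) : ⁅x, -m⁆ = -⁅x, m⁆ := lie_neg x m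
lemma my_lie_zero (x : ℂ ⊗[ℝ] L) : ⁅x, (0 : ℂ ⊗[ℝ] L)⁆ = 0 := lie_zero x
lemma my_zero_lie (m : ℂ ⊗[ℝ] L) : ⁅(0 : ℂ ⊗[ℝ] L), m⁆ = 0 := zero_lie m
lemma my_lie_smul (c : ℂ) (x m : ℂ ⊗[ℝ] L) : ⁅x, c • m⁆ = c • ⁅x, m⁆ := lie_smul c x m
lemma my_smul_lie (c : ℂ) (x m : ℂ ⊗[ℝ] L) : ⁅c • x, m⁆ = c • ⁅x, m⁆ := smul_lie c x m
lemma my_bracket_tmul (s u : ℂ) (x y : L) :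
    ⁅s ⊗ₜ[ℝ] x, u ⊗ₜ[ℝ] y⁆ = (s * u) ⊗ₜ[ℝ] ⁅x, y⁆ := rfl

lemma ceq_neg {a : ℂ} (h : a = -a) : a = 0 := by
  have h2 : a + a = 0 := by nth_rewrite 2 [h]; exact add_neg_cancel a
  exact add_self_eq_zero.mp h2

end Bridge

section B
variable {L : Type*} [LieRing L] [LieAlgebra ℝ L]


lemma bracket_one_tmul' (x : L) (z : ℂ ⊗[ℝ] L) (u v : L)
    (h : (1:ℂ) ⊗ₜ[ℝ] u + Complex.I ⊗ₜ[ℝ] v = z) :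
    ⁅(1:ℂ) ⊗ₜ[ℝ] x, z⁆ = (1:ℂ) ⊗ₜ[ℝ] ⁅x, u⁆ + Complex.I ⊗ₜ[ℝ] ⁅x, v⁆ := by
  rw [← h, my_lie_add, my_bracket_tmul, my_bracket_tmul, one_mul, one_mul]

variable (σ : L →ₗ⁅ℝ⁆ L)

lemma sigc_tmul (c : ℂ) (x : L) :
    (σ : L →ₗ[ℝ] L).baseChange ℂ (c ⊗ₜ[ℝ] x) = c ⊗ₜ[ℝ] σ x := by
  simp

lemma sigc_bracket (z w : ℂ ⊗[ℝ] L) :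
    (σ : L →ₗ[ℝ] L).baseChange ℂ ⁅z, w⁆ =
      ⁅(σ : L →ₗ[ℝ] L).baseChange ℂ z, (σ : L →ₗ[ℝ] L).baseChange ℂ w⁆ := by
  induction z using TensorProduct.induction_on with
  | zero => simp
  | add z₁ z₂ h₁ h₂ => rw [my_add_lie, map_add, map_add, my_add_lie, h₁, h₂]
  | tmul a x =>
    induction w using TensorProduct.induction_on with
    | zero => simp only [my_lie_zero, map_zero]

    | add w₁ w₂ h₁ h₂ => rw [my_lie_add, map_add, map_add, my_lie_add, h₁, h₂]
    | tmul b y =>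
        rw [my_bracket_tmul, sigc_tmul, sigc_tmul, sigc_tmul, my_bracket_tmul]
        congr 1
        exact σ.map_lie x y

variable {σ} in
lemma sigc_invol (hσinv : ∀ x, σ (σ x) = x) (z : ℂ ⊗[ℝ] L) :
    (σ : L →ₗ[ℝ] L).baseChange ℂ ((σ : L →ₗ[ℝ] L).baseChange ℂ z) = z := by
  induction z using TensorProduct.induction_on with
  | zero => simp
  | add z₁ z₂ h₁ h₂ => rw [map_add, map_add, h₁, h₂]
  | tmul a x => rw [sigc_tmul, sigc_tmul, hσinv]

variable (t : Submodule ℝ L) (hσt : ∀ x ∈ t, σ x ∈ t)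

lemma sigmaStar_apply (α : t →ₗ[ℝ] ℂ) (H : t) :
    sigmaStar σ t hσt α H = α ⟨σ (H : L), hσt _ H.2⟩ := rfl

lemma sigmaStar_invol (hσinv : ∀ x, σ (σ x) = x) (α : t →ₗ[ℝ] ℂ) :
    sigmaStar σ t hσt (sigmaStar σ t hσt α) = α := by
  ext H
  rw [sigmaStar_apply, sigmaStar_apply]
  congr 1
  exact Subtype.ext (hσinv _)

lemma rootSet_map_sig (hσinv : ∀ x, σ (σ x) = x) {α : t →ₗ[ℝ] ℂ} {Z : ℂ ⊗[ℝ] L} (hZ : Z ∈ rootSet t α) :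
    (σ : L →ₗ[ℝ] L).baseChange ℂ Z ∈ rootSet t (sigmaStar σ t hσt α) := by
  intro H
  have h1 : ((1:ℂ) ⊗ₜ[ℝ] (H : L) : ℂ ⊗[ℝ] L)
      = (σ : L →ₗ[ℝ] L).baseChange ℂ ((1:ℂ) ⊗ₜ[ℝ] (σ (H : L))) := by
    rw [sigc_tmul, hσinv]
  rw [h1, ← sigc_bracket, hZ ⟨σ (H : L), hσt _ H.2⟩, map_smul, sigmaStar_apply]

lemma roots_eq_of_mem {α β : t →ₗ[ℝ] ℂ} {Z : ℂ ⊗[ℝ] L}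
    (hα : Z ∈ rootSet t α) (hβ : Z ∈ rootSet t β) (hZ : Z ≠ 0) : α = β := by
  ext H
  have h := (hα H).symm.trans (hβ H)
  have h2 : (α H - β H) • Z = 0 := by rw [sub_smul, h, sub_self]
  rcases smul_eq_zero.mp h2 with h3 | h3
  · exact sub_eq_zero.mp h3
  · exact absurd h3 hZ

lemma rootSet_sub {α : t →ₗ[ℝ] ℂ} {Z W : ℂ ⊗[ℝ] L}
    (hZ : Z ∈ rootSet t α) (hW : W ∈ rootSet t α) : Z - W ∈ rootSet t α := by
  intro H; rw [my_lie_sub, hZ H, hW H, smul_sub]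

lemma rootSet_add {α : t →ₗ[ℝ] ℂ} {Z W : ℂ ⊗[ℝ] L}
    (hZ : Z ∈ rootSet t α) (hW : W ∈ rootSet t α) : Z + W ∈ rootSet t α := by
  intro H; rw [my_lie_add, hZ H, hW H, smul_add]

lemma rootSet_neg {α : t →ₗ[ℝ] ℂ} {Z : ℂ ⊗[ℝ] L}
    (hZ : Z ∈ rootSet t α) : -Z ∈ rootSet t α := by
  intro H; rw [my_lie_neg, hZ H, smul_neg]

end B

section C
variable {L : Type*} [LieRing L] [LieAlgebra ℝ L]

lemma ReL_csmul (d : ℂ) (z : ℂ ⊗[ℝ] L) :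
    ReL L (d • z) = d.re • ReL L z - d.im • ImL L z := by
  induction z using TensorProduct.induction_on with
  | zero => simp
  | tmul c x =>
      rw [TensorProduct.smul_tmul', smul_eq_mul, ReL_tmul, ReL_tmul, ImL_tmul,
        Complex.mul_re, sub_smul, smul_smul, smul_smul]
  | add z w hz hw =>
      rw [smul_add, map_add, hz, hw, map_add, map_add, smul_add, smul_add]
      abel

lemma ImL_csmul (d : ℂ) (z : ℂ ⊗[ℝ] L) :
    ImL L (d • z) = d.re • ImL L z + d.im • ReL L z := by
  induction z using TensorProduct.induction_on with
  | zero => simp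
  | tmul c x =>
      rw [TensorProduct.smul_tmul', smul_eq_mul, ImL_tmul, ImL_tmul, ReL_tmul,
        Complex.mul_im, add_smul, smul_smul, smul_smul, mul_comm d.im c.re]
  | add z w hz hw =>
      rw [smul_add, map_add, hz, hw, map_add, map_add, smul_add, smul_add]
      abel

lemma mem_baseChange_iff (q : Submodule ℝ L) (z : ℂ ⊗[ℝ] L) :
    z ∈ q.baseChange ℂ ↔ ReL L z ∈ q ∧ ImL L z ∈ q := by
  constructor
  · intro hz
    rw [Submodule.baseChange_eq_span] at hz
    induction hz using Submodule.span_induction with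
    | mem w hw =>
        obtain ⟨x, hx, rfl⟩ := hw
        have hx' : x ∈ q := hx
        have h1 : ReL L ((TensorProduct.mk ℝ ℂ L 1) x) = x := by simp
        have h2 : ImL L ((TensorProduct.mk ℝ ℂ L 1) x) = 0 := by simp
        rw [h1, h2]
        exact ⟨hx', q.zero_mem⟩
    | zero => simp [q.zero_mem]
    | add z₁ z₂ _ _ h₁ h₂ =>
        exact ⟨by rw [map_add]; exact q.add_mem h₁.1 h₂.1,
          by rw [map_add]; exact q.add_mem h₁.2 h₂.2⟩
    | smul d z₁ _ h₁ =>
        refine ⟨?_, ?_⟩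
        · rw [ReL_csmul]; exact q.sub_mem (q.smul_mem _ h₁.1) (q.smul_mem _ h₁.2)
        · rw [ImL_csmul]; exact q.add_mem (q.smul_mem _ h₁.2) (q.smul_mem _ h₁.1)
  · rintro ⟨h₁, h₂⟩
    rw [← reim_repr z]
    exact (q.baseChange ℂ).add_mem (Submodule.tmul_mem_baseChange_of_mem _ h₁)
      (Submodule.tmul_mem_baseChange_of_mem _ h₂)

variable (σ : L →ₗ⁅ℝ⁆ L)

lemma sigc_repr (z : ℂ ⊗[ℝ] L) :
    (σ : L →ₗ[ℝ] L).baseChange ℂ z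
      = (1:ℂ) ⊗ₜ[ℝ] (σ (ReL L z)) + Complex.I ⊗ₜ[ℝ] (σ (ImL L z)) := by
  conv_lhs => rw [← reim_repr z]
  rw [map_add, sigc_tmul, sigc_tmul]

lemma sigc_eq_iff (z : ℂ ⊗[ℝ] L) :
    (σ : L →ₗ[ℝ] L).baseChange ℂ z = z ↔ σ (ReL L z) = ReL L z ∧ σ (ImL L z) = ImL L z := by
  constructor
  · intro h
    rw [sigc_repr] at h
    conv_rhs at h => rw [← reim_repr z]
    exact reim_inj h
  · rintro ⟨h₁, h₂⟩
    rw [sigc_repr, h₁, h₂, reim_repr]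

lemma sigc_eq_neg_iff (z : ℂ ⊗[ℝ] L) :
    (σ : L →ₗ[ℝ] L).baseChange ℂ z = -z
      ↔ σ (ReL L z) = -ReL L z ∧ σ (ImL L z) = -ImL L z := by
  have hneg : -z = (1:ℂ) ⊗ₜ[ℝ] (-(ReL L z)) + Complex.I ⊗ₜ[ℝ] (-(ImL L z)) := by
    rw [tmul_neg, tmul_neg, ← neg_add]
    rw [reim_repr z]
  constructor
  · intro h
    rw [sigc_repr, hneg] at h
    exact reim_inj h
  · rintro ⟨h₁, h₂⟩
    rw [sigc_repr, h₁, h₂]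
    exact hneg.symm

variable {k p : Submodule ℝ L}

lemma mem_k_iff (hk : ∀ x, x ∈ k ↔ σ x = x) (z : ℂ ⊗[ℝ] L) :
    z ∈ k.baseChange ℂ ↔ (σ : L →ₗ[ℝ] L).baseChange ℂ z = z := by
  rw [mem_baseChange_iff, sigc_eq_iff, hk, hk]

lemma mem_p_iff (hp : ∀ x, x ∈ p ↔ σ x = -x) (z : ℂ ⊗[ℝ] L) :
    z ∈ p.baseChange ℂ ↔ (σ : L →ₗ[ℝ] L).baseChange ℂ z = -z := by
  rw [mem_baseChange_iff, sigc_eq_neg_iff, hp, hp]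

variable {t : Submodule ℝ L}

lemma central_t (htab : ∀ x ∈ t, ∀ y ∈ t, ⁅x, y⁆ = 0)
    (htmax : ∀ s : Submodule ℝ L, (∀ x ∈ s, ∀ y ∈ s, ⁅x, y⁆ = 0) → t ≤ s → s = t)
    {u : L} (hu : ∀ x ∈ t, ⁅x, u⁆ = 0) : u ∈ t := by
  set s : Submodule ℝ L := t ⊔ Submodule.span ℝ {u} with hs
  have habs : ∀ x ∈ s, ∀ y ∈ s, ⁅x, y⁆ = 0 := by
    intro x hx y hy
    obtain ⟨a, ha, b, hb, rfl⟩ := Submodule.mem_sup.mp hx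
    obtain ⟨a', ha', b', hb', rfl⟩ := Submodule.mem_sup.mp hy
    obtain ⟨c, rfl⟩ := Submodule.mem_span_singleton.mp hb
    obtain ⟨c', rfl⟩ := Submodule.mem_span_singleton.mp hb'
    have h1 : ⁅a, u⁆ = 0 := hu a ha
    have h2 : ⁅u, a'⁆ = 0 := by rw [← lie_skew, hu a' ha', neg_zero]
    simp [lie_add, add_lie, lie_smul, smul_lie, htab a ha a' ha', h1, h2]
  have := htmax s habs le_sup_left
  rw [← this]
  exact Submodule.mem_sup_right (Submodule.mem_span_singleton_self u)

lemma central_tK {tK : Submodule ℝ L} (htab : ∀ x ∈ t, ∀ y ∈ t, ⁅x, y⁆ = 0)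
    (htK : tK = t ⊓ k)
    (htKmax : ∀ s : Submodule ℝ L, s ≤ k → (∀ x ∈ s, ∀ y ∈ s, ⁅x, y⁆ = 0) → tK ≤ s → s = tK)
    {u : L} (huk : u ∈ k) (hu : ∀ x ∈ t, x ∈ k → ⁅x, u⁆ = 0) : u ∈ tK := by
  set s : Submodule ℝ L := tK ⊔ Submodule.span ℝ {u} with hs
  have hsk : s ≤ k := sup_le (htK ▸ inf_le_right) ((Submodule.span_singleton_le_iff_mem u k).mpr huk)
  have habs : ∀ x ∈ s, ∀ y ∈ s, ⁅x, y⁆ = 0 := by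
    intro x hx y hy
    obtain ⟨a, ha, b, hb, rfl⟩ := Submodule.mem_sup.mp hx
    obtain ⟨a', ha', b', hb', rfl⟩ := Submodule.mem_sup.mp hy
    obtain ⟨c, rfl⟩ := Submodule.mem_span_singleton.mp hb
    obtain ⟨c', rfl⟩ := Submodule.mem_span_singleton.mp hb'
    rw [htK] at ha ha'
    have h1 : ⁅a, u⁆ = 0 := hu a ha.1 ha.2
    have h2 : ⁅u, a'⁆ = 0 := by rw [← lie_skew, hu a' ha'.1 ha'.2, neg_zero]
    simp [lie_add, add_lie, lie_smul, smul_lie, htab a ha.1 a' ha'.1, h1, h2]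
  have := htKmax s hsk habs le_sup_left
  rw [← this]
  exact Submodule.mem_sup_right (Submodule.mem_span_singleton_self u)

variable (hσt : ∀ x ∈ t, σ x ∈ t)

lemma isRoot_sigmaStar (hσinv : ∀ x, σ (σ x) = x) {α : t →ₗ[ℝ] ℂ} (hα : IsRoot t α) :
    IsRoot t (sigmaStar σ t hσt α) := by
  obtain ⟨hα0, Z, hZ, hZ0⟩ := hα
  refine ⟨?_, (σ : L →ₗ[ℝ] L).baseChange ℂ Z, rootSet_map_sig σ t hσt hσinv hZ, ?_⟩
  · intro h0
    apply hα0
    have := sigmaStar_invol σ t hσt hσinv α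
    rw [h0] at this
    rw [← this]
    ext H
    simp [sigmaStar_apply]
  · intro h
    apply hZ0
    have := sigc_invol hσinv Z
    rw [h, map_zero] at this
    exact this.symm

lemma part1_eq (hσinv : ∀ x, σ (σ x) = x)
    (hk : ∀ x, x ∈ k ↔ σ x = x) (hp : ∀ x, x ∈ p ↔ σ x = -x)
    {α : t →ₗ[ℝ] ℂ} (h : IsRoot1 t k α ∨ IsRoot2 t p α) :
    sigmaStar σ t hσt α = α := by
  rcases h with ⟨⟨hα0, Z, hZ, hZ0⟩, hsub⟩ | ⟨⟨hα0, Z, hZ, hZ0⟩, hsub⟩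
  · have hfix : (σ : L →ₗ[ℝ] L).baseChange ℂ Z = Z := (mem_k_iff σ hk Z).mp (hsub hZ)
    have := rootSet_map_sig σ t hσt hσinv hZ
    rw [hfix] at this
    exact roots_eq_of_mem t this hZ hZ0
  · have hfix : (σ : L →ₗ[ℝ] L).baseChange ℂ Z = -Z := (mem_p_iff σ hp Z).mp (hsub hZ)
    have := rootSet_map_sig σ t hσt hσinv hZ
    rw [hfix] at this
    have h2 : Z ∈ rootSet t (sigmaStar σ t hσt α) := by
      have := rootSet_neg t this
      rwa [neg_neg] at this
    exact roots_eq_of_mem t h2 hZ hZ0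

lemma sigmaStar_ne_neg {tK : Submodule ℝ L} (hσinv : ∀ x, σ (σ x) = x)
    (hk : ∀ x, x ∈ k ↔ σ x = x)
    (htab : ∀ x ∈ t, ∀ y ∈ t, ⁅x, y⁆ = 0)
    (htK : tK = t ⊓ k)
    (htKmax : ∀ s : Submodule ℝ L, s ≤ k → (∀ x ∈ s, ∀ y ∈ s, ⁅x, y⁆ = 0) → tK ≤ s → s = tK)
    {α : t →ₗ[ℝ] ℂ} (hα : IsRoot t α) : sigmaStar σ t hσt α ≠ -α := by
  intro hc
  obtain ⟨hα0, Z, hZ, hZ0⟩ := hα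
  -- α vanishes on σ-fixed part of t
  have hvanish : ∀ H : t, σ (H : L) = H → α H = 0 := by
    intro H hH
    have h1 : sigmaStar σ t hσt α H = -(α H) := by rw [hc]; rfl
    rw [sigmaStar_apply] at h1
    have h2 : (⟨σ (H : L), hσt _ H.2⟩ : t) = H := Subtype.ext hH
    rw [h2] at h1
    exact ceq_neg h1
  obtain ⟨H₁, hH₁⟩ := DFunLike.ne_iff.mp hα0
  simp only [LinearMap.zero_apply] at hH₁
  set H₀ : t := H₁ - ⟨σ (H₁ : L), hσt _ H₁.2⟩ with hH₀
  have hσH₀ : σ (H₀ : L) = -(H₀ : L) := by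
    have h1 : (H₀ : L) = (H₁ : L) - σ (H₁ : L) := rfl
    have hs : σ ((H₁ : L) - σ (H₁ : L)) = σ (H₁ : L) - σ (σ (H₁ : L)) :=
      LinearMap.map_sub (σ : L →ₗ[ℝ] L) _ _
    rw [h1, hs, hσinv]
    abel
  have hαH₀ : α H₀ ≠ 0 := by
    have h3 : α ⟨σ (H₁ : L), hσt _ H₁.2⟩ = -(α H₁) := by
      have := LinearMap.congr_fun hc H₁
      rw [sigmaStar_apply] at this
      simpa using this
    have : α H₀ = α H₁ - α ⟨σ (H₁ : L), hσt _ H₁.2⟩ := by rw [hH₀, map_sub]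
    rw [this, h3, sub_neg_eq_add]
    intro hcon
    apply hH₁
    have : α H₁ + α H₁ = 0 := hcon
    have h4 := add_self_eq_zero.mp this
    simpa using h4
  set Zs := (σ : L →ₗ[ℝ] L).baseChange ℂ Z with hZs
  have hZs_root : Zs ∈ rootSet t (-α) := by
    have := rootSet_map_sig σ t hσt hσinv hZ
    rwa [hc] at this
  set W := Z + Zs with hW
  have hσW : (σ : L →ₗ[ℝ] L).baseChange ℂ W = W := by
    rw [hW, map_add, ← hZs, sigc_invol hσinv, add_comm]
  set u := ReL L W with hu_def
  set v := ImL L W with hv_def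
  obtain ⟨hσu, hσv⟩ := (sigc_eq_iff σ W).mp hσW
  have hbrk0 : ∀ H : t, σ (H : L) = H → ⁅(H : L), u⁆ = 0 ∧ ⁅(H : L), v⁆ = 0 := by
    intro H hH
    have h1 : ⁅(1:ℂ) ⊗ₜ[ℝ] (H : L), W⁆ = 0 := by
      rw [hW, my_lie_add, hZ H, hZs_root H]
      have h0 : α H = 0 := hvanish H hH
      have h0' : (-α) H = 0 := by simp [h0]
      rw [h0, h0', zero_smul, zero_smul, add_zero]
    have h2 := bracket_one_tmul' (H : L) W u v (by rw [hu_def, hv_def, reim_repr])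
    rw [h1] at h2
    exact reim_eq_zero h2.symm
  have hu_t : u ∈ t := by
    have huk : u ∈ k := (hk u).mpr hσu
    have := central_tK htab htK htKmax huk (fun x hx hxk => (hbrk0 ⟨x, hx⟩ ((hk x).mp hxk)).1)
    rw [htK] at this; exact this.1
  have hv_t : v ∈ t := by
    have hvk : v ∈ k := (hk v).mpr hσv
    have := central_tK htab htK htKmax hvk (fun x hx hxk => (hbrk0 ⟨x, hx⟩ ((hk x).mp hxk)).2)
    rw [htK] at this; exact this.1
  have hbrkH₀ : ⁅(1:ℂ) ⊗ₜ[ℝ] (H₀ : L), W⁆ = 0 := by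
    have h2 := bracket_one_tmul' (H₀ : L) W u v (by rw [hu_def, hv_def, reim_repr])
    rw [h2, htab _ H₀.2 u hu_t, htab _ H₀.2 v hv_t]
    simp
  have hZeq : Z = Zs := by
    have h3 : ⁅(1:ℂ) ⊗ₜ[ℝ] (H₀ : L), W⁆ = α H₀ • (Z - Zs) := by
      rw [hW, my_lie_add, hZ H₀, hZs_root H₀]
      have : (-α) H₀ = -(α H₀) := rfl
      rw [this, neg_smul, smul_sub]
      abel
    rw [hbrkH₀] at h3
    have h4 := smul_eq_zero.mp h3.symm
    rcases h4 with h4 | h4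
    · exact absurd h4 hαH₀
    · have := sub_eq_zero.mp h4; exact this
  have : α = -α := roots_eq_of_mem t hZ (hZeq ▸ hZs_root) hZ0
  apply hα0
  ext H
  have := LinearMap.congr_fun this H
  have h5 : α H = -(α H) := this
  exact ceq_neg h5

end C

set_option linter.unusedSectionVars false
section D
variable {L : Type*} [LieRing L] [LieAlgebra ℝ L] [Module.Finite ℝ L]

lemma ReL_of_repr (a b : L) : ReL L ((1:ℂ) ⊗ₜ[ℝ] a + Complex.I ⊗ₜ[ℝ] b) = a := by
  simp

lemma ImL_of_repr (a b : L) : ImL L ((1:ℂ) ⊗ₜ[ℝ] a + Complex.I ⊗ₜ[ℝ] b) = b := by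
  simp

lemma killing_tmul (x y : L) :
    killingForm ℂ (ℂ ⊗[ℝ] L) ((1:ℂ) ⊗ₜ[ℝ] x) ((1:ℂ) ⊗ₜ[ℝ] y)
      = (killingForm ℝ L x y : ℂ) := by
  rw [killingForm_apply_apply, killingForm_apply_apply]
  have h1 : LieAlgebra.ad ℂ (ℂ ⊗[ℝ] L) ((1:ℂ) ⊗ₜ[ℝ] x) = (LieAlgebra.ad ℝ L x).baseChange ℂ :=
    LieModule.toEnd_baseChange ℝ ℂ L L x
  have h2 : LieAlgebra.ad ℂ (ℂ ⊗[ℝ] L) ((1:ℂ) ⊗ₜ[ℝ] y) = (LieAlgebra.ad ℝ L y).baseChange ℂ :=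
    LieModule.toEnd_baseChange ℝ ℂ L L y
  rw [h1, h2, ← LinearMap.baseChange_comp, LinearMap.trace_baseChange]
  rfl

lemma killing_neg {x : L} (hkill : ∀ x : L, x ≠ 0 → killingForm ℝ L x x < 0)
    (h : ∀ y : L, killingForm ℝ L x y = 0) : x = 0 := by
  by_contra hx
  have := hkill x hx
  rw [h x] at this
  exact lt_irrefl 0 this

lemma isKilling_complexification (hkill : ∀ x : L, x ≠ 0 → killingForm ℝ L x x < 0) :
    LieAlgebra.IsKilling ℂ (ℂ ⊗[ℝ] L) := by
  constructor
  rw [eq_bot_iff]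
  intro z hz
  rw [LieIdeal.mem_killingCompl] at hz
  rw [LieSubmodule.mem_bot]
  have key : ∀ y : L, killingForm ℝ L y (ReL L z) = 0 ∧ killingForm ℝ L y (ImL L z) = 0 := by
    intro y
    have h1 := hz ((1:ℂ) ⊗ₜ[ℝ] y) trivial
    have hrepr := reim_repr z
    rw [← hrepr] at h1
    have h2 : killingForm ℂ (ℂ ⊗[ℝ] L) ((1:ℂ) ⊗ₜ[ℝ] y)
        ((1:ℂ) ⊗ₜ[ℝ] (ReL L z) + Complex.I ⊗ₜ[ℝ] (ImL L z))
        = (killingForm ℝ L y (ReL L z) : ℂ)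
          + Complex.I * (killingForm ℝ L y (ImL L z) : ℂ) := by
      have hI : Complex.I ⊗ₜ[ℝ] (ImL L z) = Complex.I • ((1:ℂ) ⊗ₜ[ℝ] (ImL L z)) := by
        rw [TensorProduct.smul_tmul', smul_eq_mul, mul_one]
      rw [map_add, hI, map_smul, killing_tmul, killing_tmul, smul_eq_mul]
    rw [h2] at h1
    constructor
    · have := congrArg Complex.re h1
      simpa using this
    · have := congrArg Complex.im h1
      simpa using this
  have hre : ReL L z = 0 := killing_neg hkill fun y =>
    by rw [LieModule.traceForm_comm]; exact (key y).1
  have him : ImL L z = 0 := killing_neg hkill fun y =>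
    by rw [LieModule.traceForm_comm]; exact (key y).2
  have := reim_repr z
  rw [hre, him] at this
  simpa using this.symm

variable (t : Submodule ℝ L)

lemma tc_bracket_zero (htab : ∀ x ∈ t, ∀ y ∈ t, ⁅x, y⁆ = 0)
    {z w : ℂ ⊗[ℝ] L} (hz : z ∈ t.baseChange ℂ) (hw : w ∈ t.baseChange ℂ) :
    ⁅z, w⁆ = 0 := by
  obtain ⟨hz1, hz2⟩ := (mem_baseChange_iff t z).mp hz
  obtain ⟨hw1, hw2⟩ := (mem_baseChange_iff t w).mp hw
  rw [← reim_repr z, ← reim_repr w]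
  rw [my_lie_add, my_add_lie, my_add_lie, my_bracket_tmul, my_bracket_tmul, my_bracket_tmul,
    my_bracket_tmul]
  rw [htab _ hz1 _ hw1, htab _ hz1 _ hw2, htab _ hz2 _ hw1, htab _ hz2 _ hw2]
  simp

/-- The complexification of `t` as a Lie subalgebra. -/
noncomputable def tC (htab : ∀ x ∈ t, ∀ y ∈ t, ⁅x, y⁆ = 0) : LieSubalgebra ℂ (ℂ ⊗[ℝ] L) :=
  { t.baseChange ℂ with
    lie_mem' := by
      intro x y hx hy
      have : ⁅x, y⁆ = 0 := tc_bracket_zero t htab hx hy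
      rw [this]
      exact (t.baseChange ℂ).zero_mem }

lemma mem_tC_iff (htab : ∀ x ∈ t, ∀ y ∈ t, ⁅x, y⁆ = 0) (z : ℂ ⊗[ℝ] L) :
    z ∈ tC t htab ↔ z ∈ t.baseChange ℂ := Iff.rfl

end D

section E
variable {L : Type*} [LieRing L] [LieAlgebra ℝ L] [Module.Finite ℝ L]

lemma my_lie_skew (x y : ℂ ⊗[ℝ] L) : ⁅x, y⁆ = -⁅y, x⁆ := (lie_skew x y).symm

variable (t : Submodule ℝ L)

lemma tC_abelian (htab : ∀ x ∈ t, ∀ y ∈ t, ⁅x, y⁆ = 0) : IsLieAbelian (tC t htab) :=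
  ⟨fun x y => Subtype.ext (tc_bracket_zero t htab x.2 y.2)⟩

lemma bracket_mem_t_eq_zero (hkill : ∀ x : L, x ≠ 0 → killingForm ℝ L x x < 0)
    (htab : ∀ x ∈ t, ∀ y ∈ t, ⁅x, y⁆ = 0)
    {x u : L} (hx : x ∈ t) (hmem : ⁅x, u⁆ ∈ t) : ⁅x, u⁆ = 0 := by
  have hperp : ∀ y ∈ t, killingForm ℝ L ⁅x, u⁆ y = 0 := by
    intro y hy
    have h1 : killingForm ℝ L ⁅u, x⁆ y = killingForm ℝ L u ⁅x, y⁆ :=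
      LieModule.traceForm_apply_lie_apply ℝ L L u x y
    rw [htab x hx y hy] at h1
    have h2 : ⁅x, u⁆ = -⁅u, x⁆ := (lie_skew x u).symm
    rw [h2, map_neg, LinearMap.neg_apply, h1]
    simp
  by_contra hne
  have := hkill _ hne
  rw [hperp _ hmem] at this
  exact lt_irrefl 0 this

lemma tC_cartan (hkill : ∀ x : L, x ≠ 0 → killingForm ℝ L x x < 0)
    (htab : ∀ x ∈ t, ∀ y ∈ t, ⁅x, y⁆ = 0)
    (htmax : ∀ s : Submodule ℝ L, (∀ x ∈ s, ∀ y ∈ s, ⁅x, y⁆ = 0) → t ≤ s → s = t) :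
    (tC t htab).IsCartanSubalgebra := by
  haveI := tC_abelian t htab
  constructor
  · infer_instance
  · refine le_antisymm ?_ (LieSubalgebra.le_normalizer _)
    intro z hz
    rw [LieSubalgebra.mem_normalizer_iff] at hz
    show z ∈ t.baseChange ℂ
    have hbr : ∀ x ∈ t, ⁅x, ReL L z⁆ ∈ t ∧ ⁅x, ImL L z⁆ ∈ t := by
      intro x hx
      have h1 : ⁅z, (1:ℂ) ⊗ₜ[ℝ] x⁆ ∈ tC t htab :=
        hz _ (Submodule.tmul_mem_baseChange_of_mem 1 hx)
      have h2 : ⁅(1:ℂ) ⊗ₜ[ℝ] x, z⁆ ∈ t.baseChange ℂ := by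
        rw [my_lie_skew]
        exact (t.baseChange ℂ).neg_mem h1
      rw [bracket_one_tmul' x z (ReL L z) (ImL L z) (reim_repr z)] at h2
      have h3 := (mem_baseChange_iff t _).mp h2
      rwa [ReL_of_repr, ImL_of_repr] at h3
    have hre : ReL L z ∈ t := by
      apply central_t htab htmax
      intro x hx
      exact bracket_mem_t_eq_zero t hkill htab hx (hbr x hx).1
    have him : ImL L z ∈ t := by
      apply central_t htab htmax
      intro x hx
      exact bracket_mem_t_eq_zero t hkill htab hx (hbr x hx).2
    exact (mem_baseChange_iff t z).mpr ⟨hre, him⟩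

lemma rootSet_dep (hkill : ∀ x : L, x ≠ 0 → killingForm ℝ L x x < 0)
    (htab : ∀ x ∈ t, ∀ y ∈ t, ⁅x, y⁆ = 0)
    (htmax : ∀ s : Submodule ℝ L, (∀ x ∈ s, ∀ y ∈ s, ⁅x, y⁆ = 0) → t ≤ s → s = t)
    {α : t →ₗ[ℝ] ℂ} (hα : IsRoot t α) {X Y : ℂ ⊗[ℝ] L}
    (hX : X ∈ rootSet t α) (hY : Y ∈ rootSet t α) (hX0 : X ≠ 0) :
    ∃ c : ℂ, Y = c • X := by
  haveI := isKilling_complexification hkill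
  haveI := tC_cartan t hkill htab htmax
  set H := tC t htab with hH
  have hmem : ∀ h : H, ReL L (h : ℂ ⊗[ℝ] L) ∈ t ∧ ImL L (h : ℂ ⊗[ℝ] L) ∈ t :=
    fun h => (mem_baseChange_iff t _).mp h.2
  set χ : H → ℂ := fun h =>
    α ⟨ReL L (h : ℂ ⊗[ℝ] L), (hmem h).1⟩ + Complex.I * α ⟨ImL L (h : ℂ ⊗[ℝ] L), (hmem h).2⟩
    with hχ
  have hact : ∀ (h : H) (W : ℂ ⊗[ℝ] L), W ∈ rootSet t α →
      ⁅(h : ℂ ⊗[ℝ] L), W⁆ = χ h • W := by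
    intro h W hW
    set u' : t := ⟨ReL L (h : ℂ ⊗[ℝ] L), (hmem h).1⟩ with hu'
    set v' : t := ⟨ImL L (h : ℂ ⊗[ℝ] L), (hmem h).2⟩ with hv'
    have hrepr : (h : ℂ ⊗[ℝ] L)
        = (1:ℂ) ⊗ₜ[ℝ] (u' : L) + Complex.I ⊗ₜ[ℝ] (v' : L) := (reim_repr _).symm
    have hI : Complex.I ⊗ₜ[ℝ] (v' : L) = Complex.I • ((1:ℂ) ⊗ₜ[ℝ] (v' : L)) := by
      rw [TensorProduct.smul_tmul', smul_eq_mul, mul_one]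
    rw [hrepr, my_add_lie, hI, my_smul_lie, hW u', hW v', smul_smul, ← add_smul]
  have hXmem : X ∈ LieModule.genWeightSpace (ℂ ⊗[ℝ] L) χ := by
    rw [LieModule.mem_genWeightSpace]
    intro x
    refine ⟨1, ?_⟩
    rw [pow_one]
    have h1 : ⁅(x : ℂ ⊗[ℝ] L), X⁆ = χ x • X := hact x X hX
    have h2 : (LieModule.toEnd ℂ H (ℂ ⊗[ℝ] L) x) X = ⁅(x : ℂ ⊗[ℝ] L), X⁆ := rfl
    simp only [LinearMap.sub_apply, LinearMap.smul_apply, Module.End.one_apply]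
    rw [h2, h1, sub_self]
  have hYmem : Y ∈ LieModule.genWeightSpace (ℂ ⊗[ℝ] L) χ := by
    rw [LieModule.mem_genWeightSpace]
    intro x
    refine ⟨1, ?_⟩
    rw [pow_one]
    have h1 : ⁅(x : ℂ ⊗[ℝ] L), Y⁆ = χ x • Y := hact x Y hY
    have h2 : (LieModule.toEnd ℂ H (ℂ ⊗[ℝ] L) x) Y = ⁅(x : ℂ ⊗[ℝ] L), Y⁆ := rfl
    simp only [LinearMap.sub_apply, LinearMap.smul_apply, Module.End.one_apply]
    rw [h2, h1, sub_self]
  set w : LieModule.Weight ℂ H (ℂ ⊗[ℝ] L) := ⟨χ, by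
    intro hbot
    rw [hbot] at hXmem
    exact hX0 (by simpa using hXmem)⟩ with hw
  have hnz : w.IsNonZero := by
    intro h0
    obtain ⟨H₁, hH₁⟩ := DFunLike.ne_iff.mp hα.1
    simp only [LinearMap.zero_apply] at hH₁
    set h₁ : H := ⟨(1:ℂ) ⊗ₜ[ℝ] (H₁ : L), Submodule.tmul_mem_baseChange_of_mem 1 H₁.2⟩ with hh₁
    have e1 : χ h₁ = α H₁ := by
      have e2 : (⟨ReL L ((1:ℂ) ⊗ₜ[ℝ] (H₁ : L)), (hmem h₁).1⟩ : t) = H₁ :=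
        Subtype.ext (by simp)
      have e3 : (⟨ImL L ((1:ℂ) ⊗ₜ[ℝ] (H₁ : L)), (hmem h₁).2⟩ : t) = (0 : t) :=
        Subtype.ext (by simp)
      show α ⟨ReL L ((1:ℂ) ⊗ₜ[ℝ] (H₁ : L)), _⟩ + Complex.I * α ⟨ImL L ((1:ℂ) ⊗ₜ[ℝ] (H₁ : L)), _⟩
          = α H₁
      rw [e2, e3, map_zero, mul_zero, add_zero]
    have e4 : χ h₁ = 0 := congrFun h0 h₁
    rw [e1] at e4
    exact hH₁ e4
  have hone := LieAlgebra.IsKilling.finrank_rootSpace_eq_one w hnz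
  have hXV : X ∈ LieAlgebra.rootSpace H (⇑w) := hXmem
  have hYV : Y ∈ LieAlgebra.rootSpace H (⇑w) := hYmem
  have hx0 : (⟨X, hXV⟩ : LieAlgebra.rootSpace H (⇑w)) ≠ 0 := by
    intro h
    exact hX0 (congrArg Subtype.val h)
  obtain ⟨c, hc⟩ := (finrank_eq_one_iff_of_nonzero' (⟨X, hXV⟩ : LieAlgebra.rootSpace H (⇑w))
      hx0).mp hone ⟨Y, hYV⟩
  refine ⟨c, ?_⟩
  have := congrArg Subtype.val hc
  simpa using this.symm

end E

/-- In the compact setting (`𝔤` a finite-dimensional real Lie algebra with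
negative definite Killing form, `σ` an involutive automorphism with fixed subalgebra `𝔨` and
`(−1)`-eigenspace `𝔭`, `𝔱` a `σ`-stable maximal abelian subalgebra with `𝔱_K = 𝔱 ∩ 𝔨` maximal
abelian in `𝔨` and `𝔱₀ = 𝔱 ∩ 𝔭`), for every root `α ∈ Φ` the map `σ*(α) = α ∘ σ|_𝔱` is again
a root; moreover (1) if `α ∈ Φ₁ ∪ Φ₂` then `σ*(α) = α`, and (2) if `α ∈ Φ₃` then
`σ*(α) ≠ α` and `σ*(α) ≠ −α`. -/
theorem stmt_13 (L : Type*) [LieRing L] [LieAlgebra ℝ L] [Module.Finite ℝ L]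
    (hkill : ∀ x : L, x ≠ 0 → killingForm ℝ L x x < 0)
    (σ : L →ₗ⁅ℝ⁆ L) (hσinv : ∀ x, σ (σ x) = x)
    (k p : Submodule ℝ L)
    (hk : ∀ x, x ∈ k ↔ σ x = x) (hp : ∀ x, x ∈ p ↔ σ x = -x)
    (t : Submodule ℝ L)
    (htab : ∀ x ∈ t, ∀ y ∈ t, ⁅x, y⁆ = 0)
    (htmax : ∀ s : Submodule ℝ L, (∀ x ∈ s, ∀ y ∈ s, ⁅x, y⁆ = 0) → t ≤ s → s = t)
    (hσt : ∀ x ∈ t, σ x ∈ t)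
    (tK t0 : Submodule ℝ L) (htK : tK = t ⊓ k) (ht0 : t0 = t ⊓ p)
    (htKmax : ∀ s : Submodule ℝ L, s ≤ k → (∀ x ∈ s, ∀ y ∈ s, ⁅x, y⁆ = 0) → tK ≤ s → s = tK) :
    ∀ α : t →ₗ[ℝ] ℂ, IsRoot t α →
      IsRoot t (sigmaStar σ t hσt α) ∧
      ((IsRoot1 t k α ∨ IsRoot2 t p α) → sigmaStar σ t hσt α = α) ∧
      (IsRoot3 t k p α → sigmaStar σ t hσt α ≠ α ∧ sigmaStar σ t hσt α ≠ -α) := by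
  intro α hα
  refine ⟨isRoot_sigmaStar σ hσt hσinv hα, part1_eq σ hσt hσinv hk hp, ?_⟩
  rintro ⟨hroot, hn1, hn2⟩
  refine ⟨?_, sigmaStar_ne_neg σ hσt hσinv hk htab htK htKmax hroot⟩
  intro hc
  -- an element of the root space not in 𝔨_ℂ gives a nonzero σ-anti-invariant root vector
  have hsub1 : ¬ (rootSet t α ⊆ ↑(k.baseChange ℂ)) := fun hs => hn1 ⟨hroot, hs⟩
  obtain ⟨Z, hZ, hZk⟩ := Set.not_subset.mp hsub1
  have hZk' : (σ : L →ₗ[ℝ] L).baseChange ℂ Z ≠ Z := fun h => hZk ((mem_k_iff σ hk Z).mpr h)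
  set Zm := Z - (σ : L →ₗ[ℝ] L).baseChange ℂ Z with hZm_def
  have hZm0 : Zm ≠ 0 := fun h => hZk' (sub_eq_zero.mp h).symm
  have hZm_root : Zm ∈ rootSet t α := by
    apply rootSet_sub t hZ
    have := rootSet_map_sig σ t hσt hσinv hZ
    rwa [hc] at this
  have hσZm : (σ : L →ₗ[ℝ] L).baseChange ℂ Zm = -Zm := by
    rw [hZm_def, map_sub, sigc_invol hσinv, neg_sub]
  -- an element of the root space not in 𝔭_ℂ gives a nonzero σ-invariant root vector
  have hsub2 : ¬ (rootSet t α ⊆ ↑(p.baseChange ℂ)) := fun hs => hn2 ⟨hroot, hs⟩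
  obtain ⟨Z', hZ', hZp⟩ := Set.not_subset.mp hsub2
  have hZp' : (σ : L →ₗ[ℝ] L).baseChange ℂ Z' ≠ -Z' := fun h => hZp ((mem_p_iff σ hp Z').mpr h)
  set Zp := Z' + (σ : L →ₗ[ℝ] L).baseChange ℂ Z' with hZp_def
  have hZp0 : Zp ≠ 0 := by
    intro h
    apply hZp'
    exact eq_neg_of_add_eq_zero_right h
  have hZp_root : Zp ∈ rootSet t α := by
    apply rootSet_add t hZ'
    have := rootSet_map_sig σ t hσt hσinv hZ'
    rwa [hc] at this
  have hσZp : (σ : L →ₗ[ℝ] L).baseChange ℂ Zp = Zp := by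
    rw [hZp_def, map_add, sigc_invol hσinv, add_comm]
  obtain ⟨c, hcY⟩ := rootSet_dep t hkill htab htmax hroot hZp_root hZm_root hZp0
  have h5 : -Zm = Zm := by
    have h6 := congrArg ((σ : L →ₗ[ℝ] L).baseChange ℂ) hcY
    rw [hσZm, map_smul, hσZp, ← hcY] at h6
    exact h6
  have h7 : (2:ℂ) • Zm = 0 := by
    rw [two_smul]
    nth_rewrite 1 [← h5]
    exact neg_add_cancel Zm
  rcases smul_eq_zero.mp h7 with h8 | h8
  · exact two_ne_zero h8
  · exact hZm0 h8
end

section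
/- Let m ≥ 2 be even. Define μ, δ ∈ ℝ^{2m} by: μ_{2i−1} = (−1)^{i+1}/2 and μ_{2i} = m + 1 − i for i = 1, …, m; δ_{2i−1} = 0 and δ_{2i} = 2(m − i) + 1 for i = 1, …, m. Then, with ⟨·,·⟩ the standard inner product on ℝ^{2m}, (1/(8m))·⟨μ, μ + 2δ⟩ + (2m² + m − 1)/16 = (1/12)(m+1)(4m−1) + 1/32. -/
lemma pair_sum (g : ℕ → ℝ) (m : ℕ) :
    ∑ j ∈ Finset.Icc 1 (2 * m), g j
      = ∑ i ∈ Finset.Icc 1 m, (g (2 * i - 1) + g (2 * i)) := by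
  induction m with
  | zero => simp
  | succ n ih =>
      rw [show 2 * (n + 1) = (2 * n + 1) + 1 by ring,
        Finset.sum_Icc_succ_top (by omega), Finset.sum_Icc_succ_top (by omega),
        Finset.sum_Icc_succ_top (by omega), ih,
        show 2 * (n + 1) - 1 = 2 * n + 1 by omega,
        show 2 * (n + 1) = 2 * n + 1 + 1 by omega]
      ring

lemma sum_id' (n : ℕ) : ∑ i ∈ Finset.Icc 1 n, (i : ℝ) = n * (n + 1) / 2 := by
  induction n with
  | zero => simp
  | succ k ih =>
      rw [Finset.sum_Icc_succ_top (by omega), ih]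
      push_cast; ring

lemma sum_sq' (n : ℕ) : ∑ i ∈ Finset.Icc 1 n, (i : ℝ) ^ 2 = n * (n + 1) * (2 * n + 1) / 6 := by
  induction n with
  | zero => simp
  | succ k ih =>
      rw [Finset.sum_Icc_succ_top (by omega), ih]
      push_cast; ring

/-- Let `m ≥ 2` be even and define `μ, δ ∈ ℝ^{2m}` (coordinates indexed
`1, …, 2m`) by `μ_{2i−1} = (−1)^{i+1}/2`, `μ_{2i} = m + 1 − i`, `δ_{2i−1} = 0`,
`δ_{2i} = 2(m − i) + 1` for `i = 1, …, m`. Then, with `⟨·,·⟩` the standard inner product,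
`(1/(8m))·⟨μ, μ + 2δ⟩ + (2m² + m − 1)/16 = (1/12)(m+1)(4m−1) + 1/32`. -/
theorem stmt_16 (m : ℕ) (hm : 2 ≤ m) (hmeven : Even m)
    (μ δ : ℕ → ℝ)
    (hμo : ∀ i, 1 ≤ i → i ≤ m → μ (2 * i - 1) = (-1 : ℝ) ^ (i + 1) / 2)
    (hμe : ∀ i, 1 ≤ i → i ≤ m → μ (2 * i) = (m : ℝ) + 1 - (i : ℝ))
    (hδo : ∀ i, 1 ≤ i → i ≤ m → δ (2 * i - 1) = 0)
    (hδe : ∀ i, 1 ≤ i → i ≤ m → δ (2 * i) = 2 * ((m : ℝ) - (i : ℝ)) + 1) :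
    (1 / (8 * (m : ℝ))) * (∑ j ∈ Finset.Icc 1 (2 * m), μ j * (μ j + 2 * δ j)) +
        (2 * (m : ℝ) ^ 2 + (m : ℝ) - 1) / 16 =
      (1 / 12) * ((m : ℝ) + 1) * (4 * (m : ℝ) - 1) + 1 / 32 := by
  have hm0 : (m : ℝ) ≠ 0 := by positivity
  rw [pair_sum]
  have hsum : ∑ i ∈ Finset.Icc 1 m,
      (μ (2 * i - 1) * (μ (2 * i - 1) + 2 * δ (2 * i - 1)) + μ (2 * i) * (μ (2 * i) + 2 * δ (2 * i)))
      = ∑ i ∈ Finset.Icc 1 m,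
        ((1 / 4 + ((m : ℝ) + 1) * (5 * (m : ℝ) + 3)) + (-(10 * (m : ℝ) + 8)) * (i : ℝ)
          + 5 * (i : ℝ) ^ 2) := by
    refine Finset.sum_congr rfl fun i hi => ?_
    simp only [Finset.mem_Icc] at hi
    rw [hμo i hi.1 hi.2, hμe i hi.1 hi.2, hδo i hi.1 hi.2, hδe i hi.1 hi.2]
    have h1 : ((-1 : ℝ) ^ (i + 1)) ^ 2 = 1 := by
      rw [← pow_mul, mul_comm, pow_mul, neg_one_sq, one_pow]
    linear_combination (1 / 4 : ℝ) * h1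
  rw [hsum]
  rw [Finset.sum_add_distrib, Finset.sum_add_distrib, ← Finset.mul_sum, ← Finset.mul_sum,
    Finset.sum_const, sum_id', sum_sq', Nat.card_Icc]
  simp only [Nat.add_sub_cancel, nsmul_eq_mul]
  field_simp
  ring
end

section
/- Let m = 2p ≥ 2 be even. Define μ, δ ∈ ℝ^{2m} by: μ_{2i−1} = p + 3/4 − i and μ_{2i} = p − 1/4 − i for i = 1, …, p; μ_{m+2i−1} = −(p + 1/4 − i) and μ_{m+2i} = −(p + 1/4 − i) for i = 1, …, p; δ_k = m − k + 1/2 and δ_{m+k} = −(m − k + 1/2) for k = 1, …, m. Then, with ⟨·,·⟩ the standard inner product on ℝ^{2m}, (1/(4m))·⟨μ, μ + 2δ⟩ + (2m² − m − 1)/16 = (1/12)(m−1)(4m+1) + 1/32. -/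
open Finset

private lemma sum_pair (g : ℕ → ℝ) : ∀ n : ℕ,
    ∑ j ∈ Finset.Icc 1 (2 * n), g j = ∑ i ∈ Finset.Icc 1 n, (g (2 * i - 1) + g (2 * i)) := by
  intro n
  induction n with
  | zero => simp
  | succ n ih =>
      have e1 : 2 * (n + 1) = (2 * n + 1) + 1 := by ring
      rw [e1, Finset.sum_Icc_succ_top (by omega), Finset.sum_Icc_succ_top (by omega),
        Finset.sum_Icc_succ_top (by omega : 1 ≤ n + 1), ih]
      have e2 : 2 * (n + 1) - 1 = 2 * n + 1 := by omega
      have e3 : 2 * (n + 1) = 2 * n + 1 + 1 := by omega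
      rw [e2, e3]
      ring

private lemma sum_split (g : ℕ → ℝ) (a : ℕ) : ∀ b : ℕ,
    ∑ i ∈ Finset.Icc 1 (a + b), g i
      = ∑ i ∈ Finset.Icc 1 a, g i + ∑ i ∈ Finset.Icc 1 b, g (a + i) := by
  intro b
  induction b with
  | zero => simp
  | succ b ih =>
      have e1 : a + (b + 1) = (a + b) + 1 := by ring
      rw [e1, Finset.sum_Icc_succ_top (by omega), ih,
        Finset.sum_Icc_succ_top (by omega : 1 ≤ b + 1)]
      simp only [← Nat.add_assoc]
      ring

private lemma sum_poly (A B C : ℝ) : ∀ p : ℕ,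
    ∑ i ∈ Finset.Icc 1 p, (A * (i : ℝ) ^ 2 + B * (i : ℝ) + C)
      = A * ((p : ℝ) * ((p : ℝ) + 1) * (2 * (p : ℝ) + 1) / 6)
        + B * ((p : ℝ) * ((p : ℝ) + 1) / 2) + C * (p : ℝ) := by
  intro p
  induction p with
  | zero => simp
  | succ p ih =>
      rw [Finset.sum_Icc_succ_top (by omega : 1 ≤ p + 1), ih]
      push_cast
      ring

/-- Let `m = 2p ≥ 2` be even and define `μ, δ ∈ ℝ^{2m}` (coordinates indexed
`1, …, 2m`) by `μ_{2i−1} = p + 3/4 − i`, `μ_{2i} = p − 1/4 − i`, `μ_{m+2i−1} = −(p + 1/4 − i)`,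
`μ_{m+2i} = −(p + 1/4 − i)` for `i = 1, …, p`, and `δ_k = m − k + 1/2`,
`δ_{m+k} = −(m − k + 1/2)` for `k = 1, …, m`. Then, with `⟨·,·⟩` the standard inner product,
`(1/(4m))·⟨μ, μ + 2δ⟩ + (2m² − m − 1)/16 = (1/12)(m−1)(4m+1) + 1/32`. -/
theorem stmt_19 (p m : ℕ) (hp : 1 ≤ p) (hm : m = 2 * p)
    (μ δ : ℕ → ℝ)
    (h1 : ∀ i, 1 ≤ i → i ≤ p → μ (2 * i - 1) = (p : ℝ) + 3 / 4 - (i : ℝ))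
    (h2 : ∀ i, 1 ≤ i → i ≤ p → μ (2 * i) = (p : ℝ) - 1 / 4 - (i : ℝ))
    (h3 : ∀ i, 1 ≤ i → i ≤ p → μ (m + 2 * i - 1) = -((p : ℝ) + 1 / 4 - (i : ℝ)))
    (h4 : ∀ i, 1 ≤ i → i ≤ p → μ (m + 2 * i) = -((p : ℝ) + 1 / 4 - (i : ℝ)))
    (h5 : ∀ j, 1 ≤ j → j ≤ m → δ j = (m : ℝ) - (j : ℝ) + 1 / 2)
    (h6 : ∀ j, 1 ≤ j → j ≤ m → δ (m + j) = -((m : ℝ) - (j : ℝ) + 1 / 2)) :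
    (1 / (4 * (m : ℝ))) * (∑ j ∈ Finset.Icc 1 (2 * m), μ j * (μ j + 2 * δ j)) +
        (2 * (m : ℝ) ^ 2 - (m : ℝ) - 1) / 16 =
      (1 / 12) * ((m : ℝ) - 1) * (4 * (m : ℝ) + 1) + 1 / 32 := by
  subst hm
  set g : ℕ → ℝ := fun j => μ j * (μ j + 2 * δ j) with hg
  have key : ∑ j ∈ Finset.Icc 1 (2 * (2 * p)), g j
      = ∑ i ∈ Finset.Icc 1 p,
          (20 * (i : ℝ) ^ 2 + (-(40 * (p : ℝ) + 14)) * (i : ℝ)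
            + (20 * (p : ℝ) ^ 2 + 14 * (p : ℝ) + 15 / 4)) := by
    rw [sum_pair g (2 * p)]
    have e : 2 * p = p + p := by ring
    rw [e, sum_split]
    rw [← Finset.sum_add_distrib]
    apply Finset.sum_congr rfl
    intro i hi
    rw [Finset.mem_Icc] at hi
    obtain ⟨hi1, hi2⟩ := hi
    have e1 : 2 * (p + i) - 1 = 2 * p + 2 * i - 1 := by omega
    have e2 : 2 * (p + i) = 2 * p + 2 * i := by omega
    have e3 : 2 * p + 2 * i - 1 = 2 * p + (2 * i - 1) := by omega
    have e4 : 2 * p + 2 * i = 2 * p + (2 * i) := rfl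
    have d1 : δ (2 * i - 1) = (2 * p : ℕ) - ((2 * i - 1 : ℕ) : ℝ) + 1 / 2 :=
      h5 (2 * i - 1) (by omega) (by omega)
    have d2 : δ (2 * i) = (2 * p : ℕ) - ((2 * i : ℕ) : ℝ) + 1 / 2 :=
      h5 (2 * i) (by omega) (by omega)
    have d3 : δ (2 * p + (2 * i - 1)) = -((2 * p : ℕ) - ((2 * i - 1 : ℕ) : ℝ) + 1 / 2) :=
      h6 (2 * i - 1) (by omega) (by omega)
    have d4 : δ (2 * p + 2 * i) = -((2 * p : ℕ) - ((2 * i : ℕ) : ℝ) + 1 / 2) :=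
      h6 (2 * i) (by omega) (by omega)
    have m3 : μ (2 * p + 2 * i - 1) = -((p : ℝ) + 1 / 4 - (i : ℝ)) := h3 i hi1 hi2
    have m3' : μ (2 * p + (2 * i - 1)) = -((p : ℝ) + 1 / 4 - (i : ℝ)) := by rw [← e3]; exact h3 i hi1 hi2
    have m4 : μ (2 * p + 2 * i) = -((p : ℝ) + 1 / 4 - (i : ℝ)) := h4 i hi1 hi2
    have c1 : ((2 * i - 1 : ℕ) : ℝ) = 2 * (i : ℝ) - 1 := by
      have : (2 * i - 1) + 1 = 2 * i := by omega
      have := congrArg (fun n : ℕ => (n : ℝ)) this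
      push_cast at this
      linarith
    simp only [hg, e1, e2, e3]
    rw [h1 i hi1 hi2, h2 i hi1 hi2, m3', m4, d1, d2, d3, d4, c1]
    push_cast
    ring
  rw [key, sum_poly]
  have hp' : (1 : ℝ) ≤ (p : ℝ) := by exact_mod_cast hp
  have hp0 : (p : ℝ) ≠ 0 := by linarith
  push_cast
  field_simp
  ring
end
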